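/- arXiv:1108.0096 — 9 statements merged into one kernel-verified Lean document; each statement's English description precedes it below -/
import Mathlib

section
/- For positive integers a, n, x, y, the equation a/n = 1/x + 1/y holds if and only if (ax - n)(ay - n) = n^2. Consequently, the number of ordered pairs (x,y) of positive integers with a/n = 1/x + 1/y equals the number of ordered pairs (u,v) of positive integers with uv = n^2 and u ≡ -n (mod a) and v ≡ -n (mod a). -/
lemma eft_key (a n : ℕ) (ha : 0 < a) (hn : 0 < n) (x y : ℕ) (hx : 0 < x) (hy : 0 < y) :
    (a : ℚ) / n = 1 / x + 1 / y ↔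
      ((a : ℤ) * x - n) * ((a : ℤ) * y - n) = (n : ℤ) ^ 2 := by
  have hnq : (n : ℚ) ≠ 0 := by positivity
  have hxq : (x : ℚ) ≠ 0 := by positivity
  have hyq : (y : ℚ) ≠ 0 := by positivity
  have haz : (a : ℤ) ≠ 0 := by positivity
  constructor
  · intro h
    field_simp at h
    have h2 : (a : ℤ) * (x * y) = (y + x) * n := by
      have h' : (a : ℤ) * x * y = n * (y + x) := by exact_mod_cast h
      linear_combination h'
    linear_combination (a : ℤ) * h2
  · intro h
    have h2 : (a : ℤ) * ((a:ℤ) * (x * y) - (y + x) * n) = 0 := by ring_nf; linarith [h]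
    have h3 : (a : ℤ) * (x * y) = (y + x) * n := by
      rcases mul_eq_zero.mp h2 with h | h
      · exact absurd h haz
      · linarith
    have h4 : (a : ℚ) * (x * y) = (y + x) * n := by exact_mod_cast h3
    field_simp
    linear_combination h4

lemma eft_pos (a n : ℕ) (ha : 0 < a) (hn : 0 < n) (x y : ℕ) (hx : 0 < x) (hy : 0 < y)
    (h : ((a : ℤ) * x - n) * ((a : ℤ) * y - n) = (n : ℤ) ^ 2) : n < a * x := by
  have ha' : (0:ℤ) < a := by exact_mod_cast ha
  have hn' : (0:ℤ) < n := by exact_mod_cast hn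
  have h1 : (a : ℤ) ≤ a * x := by
    have : (1:ℤ) ≤ x := by exact_mod_cast hx
    nlinarith
  have h2 : (a : ℤ) ≤ a * y := by
    have : (1:ℤ) ≤ y := by exact_mod_cast hy
    nlinarith
  have goal : (n:ℤ) < a * x := by
    by_contra hc
    push_neg at hc
    set u : ℤ := (a:ℤ) * x - n with hu
    set v : ℤ := (a:ℤ) * y - n with hv
    have hun : -(n:ℤ) < u := by simp only [hu]; linarith
    have hvn : -(n:ℤ) < v := by simp only [hv]; linarith
    have hule : u ≤ 0 := by simp only [hu]; linarith
    have hvneg : v < 0 := by nlinarith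
    nlinarith [mul_pos (show (0:ℤ) < n + u by linarith) (show (0:ℤ) < -v by linarith)]
  exact_mod_cast goal

lemma eft_dvd (a n u : ℕ) (hcu : (u : ℤ) ≡ -(n : ℤ) [ZMOD a]) : a ∣ u + n := by
  have h := Int.ModEq.dvd hcu
  have h2 : (a:ℤ) ∣ (u:ℤ) + n := by
    obtain ⟨k, hk⟩ := h
    exact ⟨-k, by linarith⟩
  exact_mod_cast h2

lemma eft_mem_fwd (a n : ℕ) (ha : 0 < a) (hn : 0 < n) (x y : ℕ) (hx : 0 < x) (hy : 0 < y)
    (h : (a : ℚ) / n = 1 / x + 1 / y) :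
    0 < a * x - n ∧ 0 < a * y - n ∧ (a * x - n) * (a * y - n) = n ^ 2 ∧
      ((a * x - n : ℕ) : ℤ) ≡ -(n : ℤ) [ZMOD a] ∧ ((a * y - n : ℕ) : ℤ) ≡ -(n : ℤ) [ZMOD a] := by
  have hE := (eft_key a n ha hn x y hx hy).mp h
  have hx1 : n < a * x := eft_pos a n ha hn x y hx hy hE
  have hy1 : n < a * y := by
    apply eft_pos a n ha hn y x hy hx
    linarith [hE, mul_comm ((a:ℤ) * x - n) ((a:ℤ) * y - n)]
  refine ⟨by omega, by omega, ?_, ?_, ?_⟩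
  · have : ((a * x - n : ℕ) : ℤ) * ((a * y - n : ℕ) : ℤ) = ((n:ℤ))^2 := by
      push_cast [Nat.cast_sub hx1.le, Nat.cast_sub hy1.le]
      linarith [hE]
    exact_mod_cast this
  · refine Int.modEq_iff_dvd.mpr ⟨-(x:ℤ), ?_⟩
    push_cast [Nat.cast_sub hx1.le]
    ring
  · refine Int.modEq_iff_dvd.mpr ⟨-(y:ℤ), ?_⟩
    push_cast [Nat.cast_sub hy1.le]
    ring

lemma eft_mem_bwd (a n : ℕ) (ha : 0 < a) (hn : 0 < n) (u v : ℕ) (hu : 0 < u) (hv : 0 < v)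
    (huv : u * v = n ^ 2) (hcu : (u : ℤ) ≡ -(n : ℤ) [ZMOD a]) (hcv : (v : ℤ) ≡ -(n : ℤ) [ZMOD a]) :
    0 < (u + n) / a ∧ 0 < (v + n) / a ∧
      (a : ℚ) / n = 1 / ((u + n) / a : ℕ) + 1 / ((v + n) / a : ℕ) := by
  have hdu := eft_dvd a n u hcu
  have hdv := eft_dvd a n v hcv
  have hxu : a * ((u + n) / a) = u + n := Nat.mul_div_cancel' hdu
  have hxv : a * ((v + n) / a) = v + n := Nat.mul_div_cancel' hdv
  have hxpos : 0 < (u + n) / a := Nat.div_pos (Nat.le_of_dvd (by omega) hdu) ha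
  have hypos : 0 < (v + n) / a := Nat.div_pos (Nat.le_of_dvd (by omega) hdv) ha
  refine ⟨hxpos, hypos, ?_⟩
  apply (eft_key a n ha hn _ _ hxpos hypos).mpr
  have e1 : (a : ℤ) * ((u + n) / a : ℕ) - n = u := by
    have h : (a : ℤ) * (((u + n) / a : ℕ) : ℤ) = (u : ℤ) + n := by exact_mod_cast hxu
    linarith
  have e2 : (a : ℤ) * ((v + n) / a : ℕ) - n = v := by
    have h : (a : ℤ) * (((v + n) / a : ℕ) : ℤ) = (v : ℤ) + n := by exact_mod_cast hxv
    linarith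
  rw [e1, e2]
  exact_mod_cast huv

/-- For positive integers `a, n, x, y`, the equation `a/n = 1/x + 1/y` holds iff
`(ax - n)(ay - n) = n²`; consequently the number of solutions `(x, y)` equals the number
of pairs `(u, v)` with `uv = n²`, `u ≡ -n (mod a)` and `v ≡ -n (mod a)`. -/
theorem binary_egyptian_fraction_transform (a n : ℕ) (ha : 0 < a) (hn : 0 < n) :
    (∀ x y : ℕ, 0 < x → 0 < y →
      ((a : ℚ) / n = 1 / x + 1 / y ↔
        ((a : ℤ) * x - n) * ((a : ℤ) * y - n) = (n : ℤ) ^ 2)) ∧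
    Nat.card {p : ℕ × ℕ | 0 < p.1 ∧ 0 < p.2 ∧ (a : ℚ) / n = 1 / p.1 + 1 / p.2} =
      Nat.card {p : ℕ × ℕ | 0 < p.1 ∧ 0 < p.2 ∧ p.1 * p.2 = n ^ 2 ∧
        (p.1 : ℤ) ≡ -(n : ℤ) [ZMOD a] ∧ (p.2 : ℤ) ≡ -(n : ℤ) [ZMOD a]} := by
  refine ⟨fun x y hx hy => eft_key a n ha hn x y hx hy, ?_⟩
  apply Nat.card_congr
  refine ⟨fun p => ⟨(a * p.1.1 - n, a * p.1.2 - n),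
            eft_mem_fwd a n ha hn p.1.1 p.1.2 p.2.1 p.2.2.1 p.2.2.2⟩,
          fun q => ⟨((q.1.1 + n) / a, (q.1.2 + n) / a),
            eft_mem_bwd a n ha hn q.1.1 q.1.2 q.2.1 q.2.2.1 q.2.2.2.1 q.2.2.2.2.1 q.2.2.2.2.2⟩,
          ?_, ?_⟩
  · intro p
    obtain ⟨hx, hy, h⟩ := p.2
    have hE := (eft_key a n ha hn p.1.1 p.1.2 hx hy).mp h
    have hx1 : n < a * p.1.1 := eft_pos a n ha hn p.1.1 p.1.2 hx hy hE
    have hy1 : n < a * p.1.2 := by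
      apply eft_pos a n ha hn p.1.2 p.1.1 hy hx
      linarith [hE, mul_comm ((a:ℤ) * p.1.1 - n) ((a:ℤ) * p.1.2 - n)]
    apply Subtype.ext
    apply Prod.ext
    · show (a * p.1.1 - n + n) / a = p.1.1
      have h1 : a * p.1.1 - n + n = a * p.1.1 := by omega
      rw [h1, Nat.mul_div_cancel_left _ ha]
    · show (a * p.1.2 - n + n) / a = p.1.2
      have h1 : a * p.1.2 - n + n = a * p.1.2 := by omega
      rw [h1, Nat.mul_div_cancel_left _ ha]
  · intro q
    obtain ⟨hu, hv, huv, hcu, hcv⟩ := q.2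
    have hdu := eft_dvd a n q.1.1 hcu
    have hdv := eft_dvd a n q.1.2 hcv
    have hxu : a * ((q.1.1 + n) / a) = q.1.1 + n := Nat.mul_div_cancel' hdu
    have hxv : a * ((q.1.2 + n) / a) = q.1.2 + n := Nat.mul_div_cancel' hdv
    apply Subtype.ext
    apply Prod.ext
    · show a * ((q.1.1 + n) / a) - n = q.1.1
      omega
    · show a * ((q.1.2 + n) / a) - n = q.1.2
      omega
end

section
/- If gcd(n,a) = 1, then the number of ordered pairs (x,y) of positive integers with a/n = 1/x + 1/y equals the number of divisors u of n² satisfying u ≡ -n (mod a). -/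
open Finset

lemma egy_rat_iff (a n x y : ℕ) (hn : 0 < n) (hx : 0 < x) (hy : 0 < y) :
    (a : ℚ) / n = 1 / x + 1 / y ↔ a * x * y = n * (x + y) := by
  have hn' : (n : ℚ) ≠ 0 := Nat.cast_ne_zero.2 hn.ne'
  have hx' : (x : ℚ) ≠ 0 := Nat.cast_ne_zero.2 hx.ne'
  have hy' : (y : ℚ) ≠ 0 := Nat.cast_ne_zero.2 hy.ne'
  rw [div_add_div _ _ hx' hy', div_eq_div_iff hn' (by positivity)]
  constructor
  · intro h
    have : (↑(a * x * y) : ℚ) = ↑(n * (x + y)) := by push_cast; linarith [h]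
    exact_mod_cast this
  · intro h
    have : (↑(a * x * y) : ℚ) = ↑(n * (x + y)) := by exact_mod_cast h
    push_cast at this; linarith [this]

lemma egy_lt (a n x y : ℕ) (hn : 0 < n) (hx : 0 < x)
    (h : a * x * y = n * (x + y)) : n < a * x := by
  have h1 : n * y < a * x * y := by nlinarith
  exact Nat.lt_of_mul_lt_mul_right h1

lemma egy_key (a n x y : ℕ) (hn : 0 < n) (hx : 0 < x) (hy : 0 < y)
    (h : a * x * y = n * (x + y)) : (a * x - n) * (a * y - n) = n ^ 2 := by
  have h1 := egy_lt a n x y hn hx h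
  have h2 := egy_lt a n y x hn hy (by ring_nf; ring_nf at h; linarith)
  have hz : ((a * x - n : ℕ) : ℤ) * ((a * y - n : ℕ) : ℤ) = (n : ℤ) ^ 2 := by
    push_cast [Nat.cast_sub h1.le, Nat.cast_sub h2.le]
    have hz' : (a : ℤ) * x * y = n * (x + y) := by exact_mod_cast h
    nlinarith [hz']
  exact_mod_cast hz

lemma egy_det (a n x y : ℕ) (hn : 0 < n) (hx : 0 < x)
    (h : a * x * y = n * (x + y)) : y * (a * x - n) = n * x := by
  have h1 := egy_lt a n x y hn hx h
  have hz : (y : ℤ) * ((a * x - n : ℕ) : ℤ) = (n : ℤ) * x := by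
    push_cast [Nat.cast_sub h1.le]
    have hz' : (a : ℤ) * x * y = n * (x + y) := by exact_mod_cast h
    nlinarith [hz']
  exact_mod_cast hz

/-- If `gcd(n, a) = 1`, the number of ordered pairs `(x, y)` of positive integers with
`a/n = 1/x + 1/y` equals the number of divisors `u` of `n²` with `u ≡ -n (mod a)`. -/
theorem binary_egyptian_fraction_count_divisors (a n : ℕ) (ha : 0 < a) (hn : 0 < n)
    (hcop : Nat.gcd n a = 1) :
    Nat.card {p : ℕ × ℕ | 0 < p.1 ∧ 0 < p.2 ∧ (a : ℚ) / n = 1 / p.1 + 1 / p.2} =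
      ((n ^ 2).divisors.filter (fun u : ℕ => (u : ℤ) ≡ -(n : ℤ) [ZMOD a])).card := by
  set S := (n ^ 2).divisors.filter (fun u : ℕ => (u : ℤ) ≡ -(n : ℤ) [ZMOD a]) with hSdef
  have hn2 : 0 < n ^ 2 := pow_pos hn 2
  have hset : {p : ℕ × ℕ | 0 < p.1 ∧ 0 < p.2 ∧ (a : ℚ) / n = 1 / p.1 + 1 / p.2}
      = {p : ℕ × ℕ | 0 < p.1 ∧ 0 < p.2 ∧ a * p.1 * p.2 = n * (p.1 + p.2)} := by
    ext ⟨x, y⟩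
    simp only [Set.mem_setOf_eq]
    constructor
    · rintro ⟨hx, hy, h⟩; exact ⟨hx, hy, (egy_rat_iff a n x y hn hx hy).mp h⟩
    · rintro ⟨hx, hy, h⟩; exact ⟨hx, hy, (egy_rat_iff a n x y hn hx hy).mpr h⟩
  rw [hset]
  have hcard : Nat.card {u // u ∈ S} = S.card := Nat.card_eq_finsetCard S
  rw [← hcard]
  -- forward map lands in S
  have hmem : ∀ x y : ℕ, 0 < x → 0 < y → a * x * y = n * (x + y) → a * x - n ∈ S := by
    intro x y hx hy h
    have h1 := egy_lt a n x y hn hx h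
    rw [hSdef, Finset.mem_filter, Nat.mem_divisors]
    refine ⟨⟨⟨a * y - n, (egy_key a n x y hn hx hy h).symm⟩, hn2.ne'⟩, ?_⟩
    have hc : ((a * x - n : ℕ) : ℤ) = a * x - n := by push_cast [Nat.cast_sub h1.le]; ring
    rw [hc, Int.modEq_iff_dvd]
    exact ⟨-x, by ring⟩
  apply Nat.card_congr
  refine Equiv.ofBijective
    (fun p => ⟨a * p.1.1 - n, hmem p.1.1 p.1.2 p.2.1 p.2.2.1 p.2.2.2⟩) ⟨?_, ?_⟩
  · rintro ⟨⟨x₁, y₁⟩, hx₁, hy₁, h₁⟩ ⟨⟨x₂, y₂⟩, hx₂, hy₂, h₂⟩ h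
    simp only [Subtype.mk.injEq] at h ⊢
    have l₁ := egy_lt a n x₁ y₁ hn hx₁ h₁
    have l₂ := egy_lt a n x₂ y₂ hn hx₂ h₂
    have hxeq : x₁ = x₂ := by
      have : a * x₁ = a * x₂ := by omega
      exact Nat.eq_of_mul_eq_mul_left ha this
    subst hxeq
    have d₁ := egy_det a n x₁ y₁ hn hx₁ h₁
    have d₂ := egy_det a n x₁ y₂ hn hx₂ h₂
    have hyeq : y₁ = y₂ := by
      have hpos : 0 < a * x₁ - n := by omega
      exact Nat.eq_of_mul_eq_mul_right hpos (d₁.trans d₂.symm)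
    simp [hyeq]
  · rintro ⟨u, hu⟩
    rw [hSdef, Finset.mem_filter, Nat.mem_divisors] at hu
    obtain ⟨⟨hdvd, -⟩, hmod⟩ := hu
    have hu0 : 0 < u := Nat.pos_of_dvd_of_pos hdvd hn2
    set v := n ^ 2 / u with hv
    have huv : u * v = n ^ 2 := Nat.mul_div_cancel' hdvd
    have hv0 : 0 < v := Nat.div_pos (Nat.le_of_dvd hn2 hdvd) hu0
    -- a ∣ u + n
    have hau : a ∣ u + n := by
      obtain ⟨k, hk⟩ := hmod.dvd
      have : (a : ℤ) ∣ ((u : ℤ) + n) := ⟨-k, by linarith⟩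
      exact_mod_cast this
    -- a ∣ v + n
    have hav : a ∣ v + n := by
      have h2 : (u : ℤ) * v = (n : ℤ) ^ 2 := by exact_mod_cast huv
      obtain ⟨k, hk⟩ := hau
      have hk' : (u : ℤ) + n = a * k := by exact_mod_cast hk
      have hmodv : (a : ℤ) ∣ (n : ℤ) * (v + n) := ⟨k * v, by linear_combination v * hk' - h2⟩
      have hmodv' : a ∣ n * (v + n) := by exact_mod_cast hmodv
      exact (Nat.Coprime.symm hcop).dvd_of_dvd_mul_left hmodv'
    set x := (u + n) / a with hxdef
    set y := (v + n) / a with hydef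
    have hax : a * x = u + n := Nat.mul_div_cancel' hau
    have hay : a * y = v + n := Nat.mul_div_cancel' hav
    have hx : 0 < x := Nat.div_pos (Nat.le_of_dvd (by omega) hau) ha
    have hy : 0 < y := Nat.div_pos (Nat.le_of_dvd (by omega) hav) ha
    have hmul : a * (a * x * y) = a * (n * (x + y)) := by
      calc a * (a * x * y) = (a * x) * (a * y) := by ring
        _ = (u + n) * (v + n) := by rw [hax, hay]
        _ = u * v + n * (u + v) + n ^ 2 := by ring
        _ = n ^ 2 + n * (u + v) + n ^ 2 := by rw [huv]
        _ = n * ((u + n) + (v + n)) := by ring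
        _ = n * (a * x + a * y) := by rw [hax, hay]
        _ = a * (n * (x + y)) := by ring
    have heq : a * x * y = n * (x + y) := Nat.eq_of_mul_eq_mul_left ha hmul
    exact ⟨⟨(x, y), hx, hy, heq⟩, Subtype.ext (by simp only; omega)⟩
end

section
/- For a positive integer n, every divisor u of n² can be written uniquely as u = n₁·n₂² where n₁ is squarefree, n₁·n₂ divides n, i.e., the pairs (u, n) with u | n² correspond bijectively to triples (n₁, n₂, n₃) with n = n₁n₂n₃, n₁ squarefree, and u = n₁n₂². -/
lemma sq_mul_squarefree_unique {a b a' b' : ℕ} (hb : b ≠ 0) (hb' : b' ≠ 0)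
    (ha : Squarefree a) (ha' : Squarefree a') (h : a * b ^ 2 = a' * b' ^ 2) :
    a = a' ∧ b = b' := by
  have ha0 : a ≠ 0 := ha.ne_zero
  have ha0' : a' ≠ 0 := ha'.ne_zero
  have hfac : ∀ p, a.factorization p + 2 * b.factorization p
      = a'.factorization p + 2 * b'.factorization p := by
    intro p
    have := congrArg (fun m => m.factorization p) h
    simpa [Nat.factorization_mul, Nat.factorization_pow, ha0, ha0', hb, hb',
      pow_ne_zero, two_mul, mul_comm] using this
  have hle : ∀ p, a.factorization p ≤ 1 := fun p => ha.natFactorization_le_one p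
  have hle' : ∀ p, a'.factorization p ≤ 1 := fun p => ha'.natFactorization_le_one p
  refine ⟨Nat.eq_of_factorization_eq ha0 ha0' fun p => ?_,
    Nat.eq_of_factorization_eq hb hb' fun p => ?_⟩ <;>
  · have := hfac p; have := hle p; have := hle' p; omega

/-- Every divisor `u` of `n²` corresponds uniquely to a triple `(n₁, n₂, n₃)` with
`n = n₁n₂n₃`, `n₁` squarefree and `u = n₁n₂²`. -/
theorem divisors_of_square_bijection (n : ℕ) (hn : 0 < n) :
    ∀ u ∈ (n ^ 2).divisors,
      ∃! t : ℕ × ℕ × ℕ, t.1 * t.2.1 * t.2.2 = n ∧ Squarefree t.1 ∧ u = t.1 * t.2.1 ^ 2 := by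
  intro u hu
  have hu0 : u ≠ 0 := (Nat.pos_of_mem_divisors hu).ne'
  have hun : u ∣ n ^ 2 := Nat.dvd_of_mem_divisors hu
  obtain ⟨a, b, hab, ha⟩ := Nat.sq_mul_squarefree u
  have ha0 : a ≠ 0 := ha.ne_zero
  have hb0 : b ≠ 0 := by
    rintro rfl
    simp at hab
    exact hu0 hab.symm
  have huab : u = a * b ^ 2 := by rw [← hab]; ring
  have hdvd : a * b ∣ n := by
    rw [← Nat.factorization_le_iff_dvd (by positivity) hn.ne']
    rw [Finsupp.le_def]
    intro p
    have h1 : u.factorization p ≤ (n ^ 2).factorization p :=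
      (Nat.factorization_le_iff_dvd hu0 (by positivity)).2 hun p
    rw [Nat.factorization_pow] at h1
    have h2 : u.factorization p = a.factorization p + 2 * b.factorization p := by
      rw [huab, Nat.factorization_mul ha0 (pow_ne_zero 2 hb0), Nat.factorization_pow]
      simp [two_mul]
    have h3 : (a * b).factorization p = a.factorization p + b.factorization p := by
      rw [Nat.factorization_mul ha0 hb0]; simp
    have h4 : a.factorization p ≤ 1 := ha.natFactorization_le_one p
    simp only [Finsupp.smul_apply, smul_eq_mul] at h1
    omega
  have habpos : 0 < a * b := Nat.pos_of_ne_zero (by positivity)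
  have hn3 : a * b * (n / (a * b)) = n := Nat.mul_div_cancel' hdvd
  refine ⟨(a, b, n / (a * b)), ⟨hn3, ha, huab⟩, ?_⟩
  rintro ⟨a', b', c'⟩ ⟨heq, ha', hu'⟩
  have hb'0 : b' ≠ 0 := by
    rintro rfl
    simp at hu'
    exact hu0 hu'
  obtain ⟨rfl, rfl⟩ := sq_mul_squarefree_unique hb'0 hb0 ha' ha (hu'.symm.trans huab)
  have hc : c' = n / (a' * b') :=
    Nat.eq_of_mul_eq_mul_left habpos (heq.trans hn3.symm)
  rw [hc]
end

section
/- For real part of s greater than 1 and χ a Dirichlet character mod a, the Dirichlet series Σ_{n≥1} (conj(χ)(n)/n^s) Σ_{u | n²} χ(u) equals L(s,χ₀)·L(s,χ)·L(s,conj(χ)) / L(2s,χ₀), where χ₀ is the principal character mod a. -/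
open Finset Complex ArithmeticFunction
open scoped LSeries.notation

namespace BinaryEgyptianAux

/-! ### Scalar prime-power identity -/

private noncomputable def Sx (x : ℂ) (j : ℕ) : ℂ := ∑ i ∈ range (j + 1), x ^ i
private noncomputable def Ux (x y : ℂ) (e : ℕ) : ℂ := ∑ j ∈ range (e + 1), Sx x j * y ^ (e - j)
private noncomputable def Ax (x y : ℂ) (e : ℕ) : ℂ := y ^ e * ∑ i ∈ range (2 * e + 1), x ^ i

private lemma Ux_succ (x y : ℂ) (k : ℕ) : Ux x y (k + 1) = y * Ux x y k + Sx x (k + 1) := by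
  rw [Ux, Ux, Finset.sum_range_succ, Nat.sub_self, pow_zero, mul_one, Finset.mul_sum]
  congr 1
  refine Finset.sum_congr rfl fun j hj => ?_
  have hj' : j ≤ k := by simpa [Nat.lt_succ_iff] using hj
  have h : k + 1 - j = (k - j) + 1 := by omega
  rw [h, pow_succ]; ring

private lemma Sx_succ2 (x : ℂ) (k : ℕ) : Sx x (k + 2) = Sx x k + x ^ (k + 1) + x ^ (k + 2) := by
  rw [Sx, Sx, Finset.sum_range_succ, Finset.sum_range_succ]

private lemma Ax_succ (x y : ℂ) (hxy : x * y = 1) (k : ℕ) :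
    Ax x y (k + 1) = y * Ax x y k + x ^ k + x ^ (k + 1) := by
  rw [Ax, Ax]
  have h2 : 2 * (k + 1) + 1 = (2 * k + 1) + 1 + 1 := by ring
  rw [h2, Finset.sum_range_succ, Finset.sum_range_succ]
  have e1 : y ^ (k + 1) * x ^ (2 * k + 1) = (x * y) ^ (k + 1) * x ^ k := by ring
  have e2 : y ^ (k + 1) * x ^ (2 * k + 1 + 1) = (x * y) ^ (k + 1) * x ^ (k + 1) := by ring
  calc y ^ (k + 1) * ((∑ i ∈ range (2 * k + 1), x ^ i) + x ^ (2 * k + 1) + x ^ (2 * k + 1 + 1))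
      = y * (y ^ k * ∑ i ∈ range (2 * k + 1), x ^ i)
        + y ^ (k + 1) * x ^ (2 * k + 1) + y ^ (k + 1) * x ^ (2 * k + 1 + 1) := by ring
    _ = _ := by rw [e1, e2, hxy, one_pow]; ring

private lemma Ux0 (x y : ℂ) : Ux x y 0 = 1 := by simp [Ux, Sx]
private lemma Ax0 (x y : ℂ) : Ax x y 0 = 1 := by simp [Ax]

private lemma AU1 (x y : ℂ) (hxy : x * y = 1) : Ax x y 1 = Ux x y 1 := by
  rw [Ax_succ x y hxy 0, Ux_succ, Ax0, Ux0]
  have hS1 : Sx x 1 = 1 + x := by simp [Sx, Finset.sum_range_succ]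
  rw [hS1]; ring

private lemma key_main (x y : ℂ) (hxy : x * y = 1) :
    ∀ k, Ux x y (k + 2) = Ux x y k + Ax x y (k + 2) := by
  intro k
  induction k with
  | zero =>
    rw [Ux_succ, Ux_succ, Ax_succ x y hxy 1, Ux0, Ax_succ x y hxy 0, Ax0, Sx_succ2]
    have hS0 : Sx x 0 = 1 := by simp [Sx]
    have hS1 : Sx x 1 = 1 + x := by simp [Sx, Finset.sum_range_succ]
    rw [hS0, hS1]
    ring
  | succ k ih =>
    have h1 : Ux x y (k + 3) = y * Ux x y (k + 2) + Sx x (k + 3) := Ux_succ x y (k + 2)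
    have h2 : Ux x y (k + 1) = y * Ux x y k + Sx x (k + 1) := Ux_succ x y k
    have h3 : Ax x y (k + 3) = y * Ax x y (k + 2) + x ^ (k + 2) + x ^ (k + 3) :=
      Ax_succ x y hxy (k + 2)
    have h4 : Sx x (k + 3) = Sx x (k + 1) + x ^ (k + 2) + x ^ (k + 3) := Sx_succ2 x (k + 1)
    show Ux x y (k + 3) = Ux x y (k + 1) + Ax x y (k + 3)
    rw [h1, ih, h3, h2, h4]; ring

private lemma key1 (x y : ℂ) (hxy : x * y = 1) (e : ℕ) :
    Ax x y e = Ux x y e + (if 2 ≤ e then Ux x y (e - 2) * (-1) else 0) := by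
  match e with
  | 0 => simp [Ax0, Ux0]
  | 1 => simp [AU1 x y hxy]
  | (k + 2) =>
    rw [if_pos (by omega : 2 ≤ k + 2)]
    have h := key_main x y hxy k
    simp only [Nat.add_sub_cancel]
    linear_combination -h

lemma scalar_key (c x y : ℂ) (h : (c = 1 ∧ x * y = 1) ∨ (c = 0 ∧ x = 0 ∧ y = 0)) (e : ℕ) :
    y ^ e * ∑ i ∈ range (2 * e + 1), x ^ i =
      (∑ j ∈ range (e + 1), (∑ l ∈ range (j + 1), c ^ l * x ^ (j - l)) * y ^ (e - j)) +
        (if 2 ≤ e then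
          (∑ j ∈ range (e - 2 + 1), (∑ l ∈ range (j + 1), c ^ l * x ^ (j - l)) * y ^ (e - 2 - j))
            * (-c) else 0) := by
  rcases h with ⟨hc, hxy⟩ | ⟨hc, hx, hy⟩
  · subst hc
    have hS : ∀ j : ℕ, (∑ l ∈ range (j + 1), (1:ℂ) ^ l * x ^ (j - l)) = Sx x j := by
      intro j
      rw [Sx]
      simpa using Finset.sum_range_reflect (fun i => x ^ i) (j + 1)
    simp only [hS]
    have h := key1 x y hxy e
    rw [Ax, Ux, Ux] at h
    simpa using h
  · subst hc; subst hx; subst hy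
    have hS : ∀ j : ℕ, (∑ l ∈ range (j + 1), (0:ℂ) ^ l * (0:ℂ) ^ (j - l))
        = if j = 0 then 1 else 0 := by
      intro j
      match j with
      | 0 => simp
      | (k + 1) =>
        rw [if_neg (by omega)]
        refine Finset.sum_eq_zero fun l hl => ?_
        rcases Nat.eq_zero_or_pos l with rfl | hl0
        · simp [zero_pow (by omega : k + 1 - 0 ≠ 0)]
        · simp [zero_pow (by omega : l ≠ 0)]
    simp only [hS]
    have hT : ∀ m : ℕ, (∑ j ∈ range (m + 1), (if j = 0 then (1:ℂ) else 0) * (0:ℂ) ^ (m - j))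
        = if m = 0 then 1 else 0 := by
      intro m
      match m with
      | 0 => simp
      | (k + 1) =>
        rw [if_neg (by omega)]
        refine Finset.sum_eq_zero fun j hj => ?_
        by_cases hj0 : j = 0
        · subst hj0; simp [zero_pow (by omega : k + 1 - 0 ≠ 0)]
        · simp [hj0]
    rw [hT e, hT (e - 2)]
    match e with
    | 0 => simp
    | (k + 1) =>
      rw [zero_pow (by omega : k + 1 ≠ 0)]
      rw [if_neg (by omega)]
      simp

/-! ### A sum-splitting helper -/

lemma split_sum (T : ℕ → ℂ) (c : ℂ) (e : ℕ) :
    (∑ i ∈ range (e + 1), T i * (if e - i = 0 then 1 else if e - i = 2 then -c else 0))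
      = T e + (if 2 ≤ e then T (e - 2) * (-c) else 0) := by
  have hpt : ∀ i ∈ range (e + 1),
      T i * (if e - i = 0 then (1:ℂ) else if e - i = 2 then -c else 0)
        = (if i = e then T i else 0) + (if 2 ≤ e ∧ i = e - 2 then T i * (-c) else 0) := by
    intro i hi
    have hi' : i ≤ e := by simpa [Nat.lt_succ_iff] using hi
    by_cases h1 : e - i = 0
    · have hie : i = e := by omega
      rw [if_pos h1, if_pos hie, if_neg (by omega), mul_one, add_zero]
    · rw [if_neg h1, if_neg (by omega : ¬ i = e)]
      by_cases h2 : e - i = 2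
      · rw [if_pos h2, if_pos (by omega : 2 ≤ e ∧ i = e - 2), zero_add]
      · rw [if_neg h2, if_neg (by omega : ¬ (2 ≤ e ∧ i = e - 2)), mul_zero, zero_add]
  rw [Finset.sum_congr rfl hpt, Finset.sum_add_distrib]
  congr 1
  · rw [Finset.sum_ite_eq' (range (e + 1)) e T, if_pos (self_mem_range_succ e)]
  · by_cases h2 : 2 ≤ e
    · rw [if_pos h2]
      have hpt2 : ∀ i ∈ range (e + 1), (if 2 ≤ e ∧ i = e - 2 then T i * (-c) else 0)
          = (if i = e - 2 then T i * (-c) else 0) := by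
        intro i _
        by_cases hi : i = e - 2 <;> simp [hi, h2]
      rw [Finset.sum_congr rfl hpt2,
        Finset.sum_ite_eq' (range (e + 1)) (e - 2) (fun i => T i * (-c)),
        if_pos (by simp only [Finset.mem_range]; omega)]
    · rw [if_neg h2]
      exact Finset.sum_eq_zero fun i _ => by rw [if_neg (by omega)]

end BinaryEgyptianAux

section Main

variable {a : ℕ} [NeZero a]

open BinaryEgyptianAux DirichletCharacter

/-- coprime and square product implies both squares -/
lemma nat_isSquare_of_coprime_mul {m n : ℕ} (h : m.Coprime n) (hsq : IsSquare (m * n)) :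
    IsSquare m := by
  obtain ⟨r, hr⟩ := hsq
  obtain ⟨d, hd⟩ := exists_eq_pow_of_mul_eq_pow (α := ℕ)
    (by rw [Nat.isUnit_iff]; exact h) (c := r) (k := 2) (by rw [hr, sq])
  exact ⟨d, by rw [hd, sq]⟩

/-- prime powers are squares iff the exponent is even -/
lemma nat_isSquare_prime_pow {p : ℕ} (hp : p.Prime) (k : ℕ) :
    IsSquare (p ^ k) ↔ Even k := by
  constructor
  · rintro ⟨r, hr⟩
    have hrd : r ∣ p ^ k := Dvd.intro_left r hr.symm
    obtain ⟨j, hj, rfl⟩ := (Nat.dvd_prime_pow hp).mp hrd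
    have : p ^ k = p ^ (j + j) := by rw [hr, pow_add]
    have := Nat.pow_right_injective hp.two_le this
    exact ⟨j, this⟩
  · rintro ⟨j, rfl⟩
    exact ⟨p ^ j, by rw [pow_add]⟩

namespace BinaryEgyptianAux

/-- The arithmetic function associated to a Dirichlet character. -/
noncomputable def chiA (ψ : DirichletCharacter ℂ a) : ArithmeticFunction ℂ :=
  toArithmeticFunction (fun n => ψ n)

lemma chiA_apply (ψ : DirichletCharacter ℂ a) {n : ℕ} (hn : n ≠ 0) : chiA ψ n = ψ n :=
  (ψ.apply_eq_toArithmeticFunction_apply hn).symm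

/-- `σ_χ`, the divisor sum of `χ`. -/
noncomputable def sigChi (χ : DirichletCharacter ℂ a) : ArithmeticFunction ℂ :=
  (ArithmeticFunction.zeta : ArithmeticFunction ℂ) * chiA χ

lemma sigChi_apply (χ : DirichletCharacter ℂ a) {n : ℕ} (hn : n ≠ 0) :
    sigChi χ n = ∑ u ∈ n.divisors, χ u := by
  rw [sigChi, ArithmeticFunction.coe_zeta_mul_apply]
  exact Finset.sum_congr rfl fun u hu =>
    chiA_apply χ (Nat.pos_of_mem_divisors hu).ne'

/-- the arithmetic function `n ↦ σ_χ(n²)`. -/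
noncomputable def sigChiSq (χ : DirichletCharacter ℂ a) : ArithmeticFunction ℂ :=
  ⟨fun n => sigChi χ (n ^ 2), by simp⟩

lemma sigChiSq_mult (χ : DirichletCharacter ℂ a) : (sigChiSq χ).IsMultiplicative := by
  have hσ : (sigChi χ).IsMultiplicative :=
    (ArithmeticFunction.isMultiplicative_zeta.natCast).mul
      (isMultiplicative_toArithmeticFunction χ)
  constructor
  · show sigChi χ (1 ^ 2) = 1
    simpa using hσ.map_one
  · intro m n h
    show sigChi χ ((m * n) ^ 2) = sigChi χ (m ^ 2) * sigChi χ (n ^ 2)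
    rw [mul_pow]
    exact hσ.map_mul_of_coprime (Nat.Coprime.pow 2 2 h)

/-- The conjugate character. -/
noncomputable def conjChar (χ : DirichletCharacter ℂ a) : DirichletCharacter ℂ a :=
  χ.ringHomComp (starRingEnd ℂ)

lemma conjChar_apply (χ : DirichletCharacter ℂ a) (z : ZMod a) :
    conjChar χ z = (starRingEnd ℂ) (χ z) := rfl

/-- the left-hand side coefficients as an arithmetic function -/
noncomputable def Fa (χ : DirichletCharacter ℂ a) : ArithmeticFunction ℂ :=
  (chiA (conjChar χ)).pmul (sigChiSq χ)

lemma Fa_mult (χ : DirichletCharacter ℂ a) : (Fa χ).IsMultiplicative :=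
  (isMultiplicative_toArithmeticFunction (conjChar χ)).pmul (sigChiSq_mult χ)

/-- the square-supported Möbius-type function -/
noncomputable def Ha : ArithmeticFunction ℂ :=
  ⟨fun n => if IsSquare n then
      ((1 : DirichletCharacter ℂ a) n.sqrt * ((moebius n.sqrt : ℤ) : ℂ)) else 0,
   by simp⟩

lemma Ha_sq (r : ℕ) :
    (Ha (a := a)) (r ^ 2) = (1 : DirichletCharacter ℂ a) r * ((moebius r : ℤ) : ℂ) := by
  show (if IsSquare (r ^ 2) then _ else _) = _
  rw [if_pos ⟨r, sq r⟩, Nat.sqrt_eq' r]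

lemma Ha_not_sq {n : ℕ} (h : ¬ IsSquare n) : (Ha (a := a)) n = 0 := by
  show (if IsSquare n then _ else _) = _
  rw [if_neg h]

lemma Ha_mult : (Ha (a := a)).IsMultiplicative := by
  constructor
  · have : (1 : ℕ) = 1 ^ 2 := by norm_num
    rw [this, Ha_sq]
    simp
  · intro m n h
    by_cases hm : IsSquare m
    · by_cases hn : IsSquare n
      · obtain ⟨r, rfl⟩ := hm
        obtain ⟨t, rfl⟩ := hn
        have hrt : r.Coprime t := by
          have h1 : r.Coprime (t * t) := Nat.Coprime.coprime_dvd_left (dvd_mul_right r r) h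
          exact Nat.Coprime.coprime_dvd_right (dvd_mul_right t t) h1
        have e1 : r * r * (t * t) = (r * t) ^ 2 := by ring
        have e2 : r * r = r ^ 2 := by ring
        have e3 : t * t = t ^ 2 := by ring
        rw [e1, e2, e3, Ha_sq, Ha_sq, Ha_sq]
        have hμ : moebius (r * t) = moebius r * moebius t :=
          ArithmeticFunction.isMultiplicative_moebius.map_mul_of_coprime hrt
        push_cast [hμ]
        rw [map_mul]
        ring
      · have hmn : ¬ IsSquare (m * n) := fun hs =>
          hn (nat_isSquare_of_coprime_mul h.symm (by rwa [mul_comm] at hs))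
        rw [Ha_not_sq hmn, Ha_not_sq hn, mul_zero]
    · have hmn : ¬ IsSquare (m * n) := fun hs => hm (nat_isSquare_of_coprime_mul h hs)
      rw [Ha_not_sq hmn, Ha_not_sq hm, zero_mul]

lemma Ha_prime_pow {p : ℕ} (hp : p.Prime) (k : ℕ) :
    (Ha (a := a)) (p ^ k) =
      if k = 0 then 1 else if k = 2 then -((1 : DirichletCharacter ℂ a) p) else 0 := by
  by_cases hk : Even k
  · obtain ⟨j, rfl⟩ := hk
    have e1 : p ^ (j + j) = (p ^ j) ^ 2 := by rw [← pow_mul]; ring_nf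
    rw [e1, Ha_sq]
    match j with
    | 0 => simp
    | 1 =>
      rw [if_neg (by omega), if_pos (by omega)]
      rw [pow_one, ArithmeticFunction.moebius_apply_prime hp]
      push_cast
      ring
    | (j + 2) =>
      rw [if_neg (by omega), if_neg (by omega)]
      rw [ArithmeticFunction.moebius_apply_prime_pow hp (by omega), if_neg (by omega)]
      simp
  · rw [Ha_not_sq (by rw [nat_isSquare_prime_pow hp]; exact hk),
      if_neg (by rintro rfl; exact hk (by norm_num)),
      if_neg (by rintro rfl; exact hk (by norm_num))]

/-- the triple convolution -/
noncomputable def Ta (χ : DirichletCharacter ℂ a) : ArithmeticFunction ℂ :=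
  chiA (1 : DirichletCharacter ℂ a) * chiA χ * chiA (conjChar χ)

lemma Ta_mult (χ : DirichletCharacter ℂ a) : (Ta χ).IsMultiplicative :=
  ((isMultiplicative_toArithmeticFunction _).mul
    (isMultiplicative_toArithmeticFunction _)).mul (isMultiplicative_toArithmeticFunction _)

lemma mul_apply_prime_pow (f g : ArithmeticFunction ℂ) {p : ℕ} (hp : p.Prime) (e : ℕ) :
    (f * g) (p ^ e) = ∑ i ∈ range (e + 1), f (p ^ i) * g (p ^ (e - i)) := by
  rw [ArithmeticFunction.mul_apply]
  rw [Nat.sum_divisorsAntidiagonal (fun x y => f x * g y)]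
  rw [Nat.sum_divisors_prime_pow hp]
  refine Finset.sum_congr rfl fun i hi => ?_
  have hi' : i ≤ e := by simpa [Nat.lt_succ_iff] using hi
  rw [Nat.pow_div hi' hp.pos]

/-- character value at a prime power -/
lemma char_pow_apply (ψ : DirichletCharacter ℂ a) (p k : ℕ) :
    ψ ((p : ℕ) ^ k : ℕ) = (ψ p) ^ k := by
  push_cast
  rw [map_pow]

/-- the main prime-power identity -/
lemma Fa_eq_Ta_mul_Ha (χ : DirichletCharacter ℂ a) : Fa χ = Ta χ * Ha (a := a) := by
  rw [ArithmeticFunction.IsMultiplicative.eq_iff_eq_on_prime_powers _ (Fa_mult χ) _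
    ((Ta_mult χ).mul Ha_mult)]
  intro p e hp
  have hpe : ∀ k : ℕ, p ^ k ≠ 0 := fun k => pow_ne_zero k hp.pos.ne'
  set c : ℂ := (1 : DirichletCharacter ℂ a) p with hc
  set x : ℂ := χ p with hx
  set y : ℂ := (starRingEnd ℂ) (χ p) with hy
  -- LHS
  have hL : Fa χ (p ^ e) = y ^ e * ∑ i ∈ range (2 * e + 1), x ^ i := by
    rw [Fa, ArithmeticFunction.pmul_apply, chiA_apply _ (hpe e)]
    have h1 : (conjChar χ) ((p : ℕ) ^ e : ℕ) = y ^ e := by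
      rw [char_pow_apply, conjChar_apply, ← map_pow]
    have h2 : sigChiSq χ (p ^ e) = ∑ i ∈ range (2 * e + 1), x ^ i := by
      show sigChi χ ((p ^ e) ^ 2) = _
      have e1 : (p ^ e) ^ 2 = p ^ (2 * e) := by rw [← pow_mul]; ring_nf
      rw [e1, sigChi_apply χ (hpe (2 * e)), Nat.sum_divisors_prime_pow hp]
      exact Finset.sum_congr rfl fun i _ => char_pow_apply χ p i
    rw [h1, h2]
  -- RHS
  have hT : ∀ i : ℕ, Ta χ (p ^ i)
      = ∑ j ∈ range (i + 1), (∑ l ∈ range (j + 1), c ^ l * x ^ (j - l)) * y ^ (i - j) := by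
    intro i
    rw [Ta, mul_apply_prime_pow _ _ hp]
    refine Finset.sum_congr rfl fun j _ => ?_
    rw [mul_apply_prime_pow _ _ hp]
    congr 1
    · refine Finset.sum_congr rfl fun l _ => ?_
      rw [chiA_apply _ (hpe l), chiA_apply _ (hpe (j - l)), char_pow_apply, char_pow_apply]
    · rw [chiA_apply _ (hpe (i - j))]
      have : (conjChar χ) ((p : ℕ) ^ (i - j) : ℕ) = y ^ (i - j) := by
        rw [char_pow_apply, conjChar_apply, ← map_pow]
      exact this
  have hR : (Ta χ * Ha (a := a)) (p ^ e)
      = (∑ j ∈ range (e + 1), (∑ l ∈ range (j + 1), c ^ l * x ^ (j - l)) * y ^ (e - j)) +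
        (if 2 ≤ e then
          (∑ j ∈ range (e - 2 + 1), (∑ l ∈ range (j + 1), c ^ l * x ^ (j - l)) * y ^ (e - 2 - j))
            * (-c) else 0) := by
    rw [mul_apply_prime_pow _ _ hp]
    have : ∀ i ∈ range (e + 1),
        Ta χ (p ^ i) * (Ha (a := a)) (p ^ (e - i))
          = Ta χ (p ^ i) * (if e - i = 0 then 1 else if e - i = 2 then -c else 0) := by
      intro i _
      rw [Ha_prime_pow hp]
    rw [Finset.sum_congr rfl this, split_sum (fun i => Ta χ (p ^ i)) c e, hT e]
    by_cases h2 : 2 ≤ e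
    · rw [if_pos h2, if_pos h2, hT (e - 2)]
    · rw [if_neg h2, if_neg h2]
  rw [hL, hR]
  -- the hypothesis for scalar_key
  have hcase : (c = 1 ∧ x * y = 1) ∨ (c = 0 ∧ x = 0 ∧ y = 0) := by
    by_cases hu : IsUnit ((p : ℕ) : ZMod a)
    · left
      constructor
      · rw [hc]; exact MulChar.one_apply hu
      · have hnorm : ‖χ ((p : ℕ) : ZMod a)‖ = 1 := by
          have := χ.unit_norm_eq_one hu.unit
          rwa [IsUnit.unit_spec] at this
        rw [hx, hy, Complex.mul_conj]
        rw [Complex.normSq_eq_norm_sq]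
        rw [hnorm]
        norm_num
    · right
      refine ⟨?_, ?_, ?_⟩
      · rw [hc]; exact MulChar.map_nonunit _ hu
      · rw [hx]; exact MulChar.map_nonunit _ hu
      · rw [hy, MulChar.map_nonunit _ hu]
        exact _root_.map_zero _
  exact scalar_key c x y hcase e

end BinaryEgyptianAux

end Main

open BinaryEgyptianAux LSeries DirichletCharacter
open scoped LSeries.notation

open Complex in
/-- For `Re s > 1`, `Σ_{n ≥ 1} conj(χ)(n) (Σ_{u ∣ n²} χ(u)) / n^s
  = L(s, χ₀) L(s, χ) L(s, conj χ) / L(2s, χ₀)`. -/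
theorem dirichlet_series_binary_egyptian (a : ℕ) [NeZero a] (χ : DirichletCharacter ℂ a)
    (s : ℂ) (hs : 1 < s.re) :
    LSeries (fun n => (starRingEnd ℂ) (χ n) * ∑ u ∈ (n ^ 2).divisors, χ u) s =
      LSeries (fun n => (1 : DirichletCharacter ℂ a) n) s * LSeries (fun n => χ n) s *
        LSeries (fun n => (starRingEnd ℂ) (χ n)) s /
          LSeries (fun n => (1 : DirichletCharacter ℂ a) n) (2 * s) := by
  have h2s : 1 < (2 * s).re := by
    have : (2 * s).re = 2 * s.re := by simp [Complex.mul_re]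
    rw [this]; linarith
  -- summabilities of characters
  have hsum1 : LSeriesSummable (fun n => (1 : DirichletCharacter ℂ a) n) s :=
    LSeriesSummable_of_one_lt_re 1 hs
  have hsumχ : LSeriesSummable (fun n => χ n) s := LSeriesSummable_of_one_lt_re χ hs
  have hsumχc : LSeriesSummable (fun n => (conjChar χ) n) s :=
    LSeriesSummable_of_one_lt_re (conjChar χ) hs
  -- transfer to arithmetic-function coefficients
  have hcongr1 : ∀ {n : ℕ}, n ≠ 0 → (fun n => (1 : DirichletCharacter ℂ a) n) n
      = (⇑(chiA (a := a) 1) : ℕ → ℂ) n := fun hn => (chiA_apply _ hn).symm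
  have hcongrχ : ∀ {n : ℕ}, n ≠ 0 → (fun n => χ n) n = (⇑(chiA χ) : ℕ → ℂ) n :=
    fun hn => (chiA_apply _ hn).symm
  have hcongrχc : ∀ {n : ℕ}, n ≠ 0 → (fun n => (conjChar χ) n) n
      = (⇑(chiA (conjChar χ)) : ℕ → ℂ) n := fun hn => (chiA_apply _ hn).symm
  have hsumA1 : LSeriesSummable (⇑(chiA (a := a) 1)) s :=
    (LSeriesSummable_congr s hcongr1).mp hsum1
  have hsumAχ : LSeriesSummable (⇑(chiA χ)) s := (LSeriesSummable_congr s hcongrχ).mp hsumχ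
  have hsumAχc : LSeriesSummable (⇑(chiA (conjChar χ))) s :=
    (LSeriesSummable_congr s hcongrχc).mp hsumχc
  -- convolution: L-series of Ta
  have hconv1 : (⇑(chiA (a := a) 1) ⍟ ⇑(chiA χ)) = ⇑(chiA (a := a) 1 * chiA χ) :=
    ArithmeticFunction.coe_mul _ _
  have hconv2 : (⇑(chiA (a := a) 1 * chiA χ) ⍟ ⇑(chiA (conjChar χ))) = ⇑(Ta χ) :=
    ArithmeticFunction.coe_mul _ _
  have hsum12 : LSeriesSummable (⇑(chiA (a := a) 1 * chiA χ)) s := by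
    rw [← hconv1]
    exact (hsumA1.LSeriesHasSum.convolution hsumAχ.LSeriesHasSum).LSeriesSummable
  have hsumT : LSeriesSummable (⇑(Ta χ)) s := by
    rw [← hconv2]
    exact (hsum12.LSeriesHasSum.convolution hsumAχc.LSeriesHasSum).LSeriesSummable
  have hLT : LSeries (⇑(Ta χ)) s
      = LSeries (fun n => (1 : DirichletCharacter ℂ a) n) s * LSeries (fun n => χ n) s *
        LSeries (fun n => (conjChar χ) n) s := by
    rw [← hconv2, LSeries_convolution' hsum12 hsumAχc, ← hconv1,
      LSeries_convolution' hsumA1 hsumAχ]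
    rw [LSeries_congr hcongr1 s, LSeries_congr hcongrχ s, LSeries_congr hcongrχc s]
  -- the Möbius-twist function g and its L-series at 2s
  set g : ℕ → ℂ := fun n => (1 : DirichletCharacter ℂ a) n * ((ArithmeticFunction.moebius n : ℤ) : ℂ) with hg
  have hsumg : LSeriesSummable g (2 * s) := by
    have := LSeriesSummable_mul (1 : DirichletCharacter ℂ a)
      (ArithmeticFunction.LSeriesSummable_moebius_iff.mpr h2s)
    exact this
  -- reindexing squares
  have hinj : Function.Injective (fun n : ℕ => n ^ 2) := Nat.pow_left_injective (by norm_num)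
  have hterm : ∀ n : ℕ, LSeries.term (⇑(Ha (a := a))) s (n ^ 2) = LSeries.term g (2 * s) n := by
    intro n
    rcases eq_or_ne n 0 with rfl | hn
    · simp [LSeries.term]
    · rw [LSeries.term_of_ne_zero (pow_ne_zero 2 hn), LSeries.term_of_ne_zero hn]
      have h1 : (Ha (a := a)) (n ^ 2) = g n := Ha_sq n
      have h2 : ((n ^ 2 : ℕ) : ℂ) ^ s = (n : ℂ) ^ (2 * s) := by
        have h3 := Complex.natCast_cpow_natCast_mul n 2 s
        push_cast at h3 ⊢
        rw [← h3]
      rw [h1, h2]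
  have hsupp : ∀ m ∉ Set.range (fun n : ℕ => n ^ 2), LSeries.term (⇑(Ha (a := a))) s m = 0 := by
    intro m hm
    have hm0 : m ≠ 0 := by
      rintro rfl
      exact hm ⟨0, by norm_num⟩
    rw [LSeries.term_of_ne_zero hm0, Ha_not_sq, zero_div]
    rintro ⟨r, hr⟩
    exact hm ⟨r, by simpa [sq] using hr.symm⟩
  have hsumH : LSeriesSummable (⇑(Ha (a := a))) s := by
    have hcomp : (LSeries.term (⇑(Ha (a := a))) s) ∘ (fun n : ℕ => n ^ 2)
        = LSeries.term g (2 * s) := funext hterm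
    have := (hinj.summable_iff hsupp).mp (hcomp ▸ hsumg)
    exact this
  have hLH : LSeries (⇑(Ha (a := a))) s = LSeries g (2 * s) := by
    have h1 : ∑' n : ℕ, LSeries.term (⇑(Ha (a := a))) s (n ^ 2)
        = ∑' m : ℕ, LSeries.term (⇑(Ha (a := a))) s m := by
      refine hinj.tsum_eq fun m hm => ?_
      by_contra hnot
      exact hm (hsupp m hnot)
    calc LSeries (⇑(Ha (a := a))) s = ∑' m : ℕ, LSeries.term (⇑(Ha (a := a))) s m := rfl
      _ = ∑' n : ℕ, LSeries.term (⇑(Ha (a := a))) s (n ^ 2) := h1.symm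
      _ = ∑' n : ℕ, LSeries.term g (2 * s) n := by exact tsum_congr hterm
      _ = LSeries g (2 * s) := rfl
  -- the left-hand side equals L-series of Fa
  have hcongrF : ∀ {n : ℕ}, n ≠ 0 →
      (fun n : ℕ => (starRingEnd ℂ) (χ n) * ∑ u ∈ (n ^ 2).divisors, χ u) n
        = (⇑(Fa χ) : ℕ → ℂ) n := by
    intro n hn
    rw [Fa, ArithmeticFunction.pmul_apply, chiA_apply _ hn]
    have h1 : (conjChar χ) (n : ℕ) = (starRingEnd ℂ) (χ n) := conjChar_apply χ n
    have h2 : sigChiSq χ n = ∑ u ∈ (n ^ 2).divisors, χ u := by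
      show sigChi χ (n ^ 2) = _
      exact sigChi_apply χ (pow_ne_zero 2 hn)
    rw [h1, h2]
  have hLF : LSeries (fun n => (starRingEnd ℂ) (χ n) * ∑ u ∈ (n ^ 2).divisors, χ u) s
      = LSeries (⇑(Fa χ)) s := LSeries_congr hcongrF s
  -- main identity
  have hFa : (⇑(Fa χ) : ℕ → ℂ) = ⇑(Ta χ) ⍟ ⇑(Ha (a := a)) := by
    rw [Fa_eq_Ta_mul_Ha χ, ArithmeticFunction.coe_mul]
  have hmain : LSeries (⇑(Fa χ)) s = LSeries (⇑(Ta χ)) s * LSeries (⇑(Ha (a := a))) s := by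
    rw [hFa, LSeries_convolution' hsumT hsumH]
  -- conjugate character L-series agreement
  have hconj : LSeries (fun n => (conjChar χ) n) s
      = LSeries (fun n => (starRingEnd ℂ) (χ n)) s := by
    refine LSeries_congr ?_ s
    intro n _
    exact conjChar_apply χ n
  -- the inverse relation
  have hQne : LSeries (fun n => (1 : DirichletCharacter ℂ a) n) (2 * s) ≠ 0 :=
    LSeries_ne_zero_of_one_lt_re 1 h2s
  have hmu : LSeries (fun n => (1 : DirichletCharacter ℂ a) n) (2 * s) * LSeries g (2 * s) = 1 := by
    have := DirichletCharacter.LSeries.mul_mu_eq_one (1 : DirichletCharacter ℂ a) h2s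
    exact this
  have hginv : LSeries g (2 * s)
      = (LSeries (fun n => (1 : DirichletCharacter ℂ a) n) (2 * s))⁻¹ :=
    eq_inv_of_mul_eq_one_left (by rw [mul_comm] at hmu; exact hmu)
  rw [hLF, hmain, hLT, hLH, hconj, hginv, div_eq_mul_inv]
end

section
/- For a squarefree positive integer a (or any positive integer a), Σ_{q | a} φ(q) · Π_{p | (a/q)} (1 + p^{-1/2})⁴ ≤ C·a for an absolute constant C; more precisely this sum equals a·Π_{p|a}(1 + p^{-1}((1+p^{-1/2})⁴ - 1)) when a is squarefree, which is O(a). -/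
open Real Finset ArithmeticFunction

noncomputable def gfun : ArithmeticFunction ℝ :=
  ⟨fun n => if n = 0 then 0 else ∏ p ∈ n.primeFactors, (1 + (p : ℝ) ^ (-(1 : ℝ) / 2)) ^ 4,
   by simp⟩

lemma gfun_apply {n : ℕ} (hn : n ≠ 0) :
    gfun n = ∏ p ∈ n.primeFactors, (1 + (p : ℝ) ^ (-(1 : ℝ) / 2)) ^ 4 := if_neg hn

lemma gfun_mult : gfun.IsMultiplicative := by
  constructor
  · simp [gfun_apply one_ne_zero]
  · intro m n hmn
    rcases eq_or_ne m 0 with rfl | hm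
    · have : n = 1 := by simpa using hmn
      simp [this, gfun, gfun_apply one_ne_zero]
    rcases eq_or_ne n 0 with rfl | hn
    · have : m = 1 := by simpa [Nat.coprime_zero_right] using hmn
      simp [this, gfun, gfun_apply one_ne_zero]
    rw [gfun_apply (mul_ne_zero hm hn), gfun_apply hm, gfun_apply hn,
      Nat.Coprime.primeFactors_mul hmn,
      Finset.prod_union (Nat.Coprime.disjoint_primeFactors hmn)]

noncomputable def phifun : ArithmeticFunction ℝ :=
  ⟨fun n => (Nat.totient n : ℝ), by simp⟩

lemma phifun_mult : phifun.IsMultiplicative := by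
  constructor
  · simp [phifun]
  · intro m n hmn
    simp [phifun, Nat.totient_mul hmn]

noncomputable def ffun : ArithmeticFunction ℝ := phifun * gfun

lemma ffun_mult : ffun.IsMultiplicative := phifun_mult.mul gfun_mult

lemma ffun_prime_pow {p k : ℕ} (hp : p.Prime) (hk : 0 < k) :
    ffun (p ^ k) = (p : ℝ) ^ k * (1 + (p : ℝ)⁻¹ * ((1 + (p : ℝ) ^ (-(1 : ℝ) / 2)) ^ 4 - 1)) := by
  have hp0 : (0 : ℝ) < p := by exact_mod_cast hp.pos
  obtain ⟨e, rfl⟩ := Nat.exists_eq_succ_of_ne_zero hk.ne'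
  rw [ffun, mul_apply, Nat.sum_divisorsAntidiagonal (f := fun x y => phifun x * gfun y),
    Nat.sum_divisors_prime_pow hp]
  have hdvd : ∀ i ∈ Finset.range (e + 1 + 1), phifun (p ^ i) * gfun (p ^ (e + 1) / p ^ i)
      = (Nat.totient (p ^ i) : ℝ) *
        (if i = e + 1 then 1 else (1 + (p : ℝ) ^ (-(1 : ℝ) / 2)) ^ 4) := by
    intro i hi
    rw [Finset.mem_range] at hi
    have hle : i ≤ e + 1 := Nat.lt_succ_iff.mp hi
    rw [Nat.pow_div hle hp.pos]
    rcases eq_or_ne i (e + 1) with rfl | hik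
    · simp [phifun, gfun_apply one_ne_zero]
    · have hki : 0 < e + 1 - i := Nat.sub_pos_of_lt (lt_of_le_of_ne hle hik)
      rw [gfun_apply (pow_ne_zero _ hp.pos.ne'), Nat.primeFactors_prime_pow hki.ne' hp]
      simp [phifun, hik]
  rw [Finset.sum_congr rfl hdvd, Finset.sum_range_succ]
  have hsum : ∑ i ∈ Finset.range (e + 1), (Nat.totient (p ^ i) : ℝ) = (p : ℝ) ^ e := by
    have h1 := Nat.sum_totient (p ^ e)
    rw [Nat.sum_divisors_prime_pow hp] at h1
    exact_mod_cast congrArg (Nat.cast : ℕ → ℝ) h1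
  have h2 : ∀ i ∈ Finset.range (e + 1),
      (Nat.totient (p ^ i) : ℝ) * (if i = e + 1 then 1 else (1 + (p : ℝ) ^ (-(1 : ℝ) / 2)) ^ 4)
      = (Nat.totient (p ^ i) : ℝ) * (1 + (p : ℝ) ^ (-(1 : ℝ) / 2)) ^ 4 := by
    intro i hi
    rw [Finset.mem_range] at hi
    rw [if_neg hi.ne]
  rw [Finset.sum_congr rfl h2, ← Finset.sum_mul, hsum, if_pos rfl]
  have htot : (Nat.totient (p ^ (e + 1)) : ℝ) = (p : ℝ) ^ e * ((p : ℝ) - 1) := by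
    rw [Nat.totient_prime_pow hp (Nat.succ_pos e)]
    push_cast [Nat.cast_sub hp.one_lt.le]
    ring
  rw [htot]
  field_simp
  simp only [Nat.succ_eq_add_one]
  ring

lemma ffun_eq {a : ℕ} (ha : a ≠ 0) :
    ffun a = (a : ℝ) * ∏ p ∈ a.primeFactors,
      (1 + (p : ℝ)⁻¹ * ((1 + (p : ℝ) ^ (-(1 : ℝ) / 2)) ^ 4 - 1)) := by
  rw [ffun_mult.multiplicative_factorization ffun ha, Finsupp.prod,
    Nat.support_factorization]
  have h1 : ∀ p ∈ a.primeFactors, ffun (p ^ a.factorization p)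
      = (p : ℝ) ^ a.factorization p *
        (1 + (p : ℝ)⁻¹ * ((1 + (p : ℝ) ^ (-(1 : ℝ) / 2)) ^ 4 - 1)) := by
    intro p hp
    exact ffun_prime_pow (Nat.prime_of_mem_primeFactors hp)
      ((Nat.Prime.factorization_pos_of_dvd (Nat.prime_of_mem_primeFactors hp) ha
        (Nat.dvd_of_mem_primeFactors hp)))
  rw [Finset.prod_congr rfl h1, Finset.prod_mul_distrib]
  congr 1
  have h2 : a.factorization.prod (· ^ ·) = a := Nat.factorization_prod_pow_eq_self ha
  rw [Finsupp.prod, Nat.support_factorization] at h2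
  exact_mod_cast congrArg (Nat.cast : ℕ → ℝ) h2

lemma sum_eq_ffun {a : ℕ} (ha : 0 < a) :
    ∑ q ∈ a.divisors, (Nat.totient q : ℝ) *
        ∏ p ∈ (a / q).primeFactors, (1 + (p : ℝ) ^ (-(1 : ℝ) / 2)) ^ 4 = ffun a := by
  rw [ffun, mul_apply, Nat.sum_divisorsAntidiagonal (f := fun x y => phifun x * gfun y)]
  refine Finset.sum_congr rfl fun q hq => ?_
  rw [Nat.mem_divisors] at hq
  have hq0 : a / q ≠ 0 := by
    have := Nat.div_pos (Nat.le_of_dvd ha hq.1) (Nat.pos_of_dvd_of_pos hq.1 ha)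
    omega
  rw [gfun_apply hq0]
  rfl

lemma factor_le {p : ℕ} (hp : 2 ≤ p) :
    1 + (p : ℝ)⁻¹ * ((1 + (p : ℝ) ^ (-(1 : ℝ) / 2)) ^ 4 - 1)
      ≤ Real.exp (15 * (p : ℝ) ^ (-(3 : ℝ) / 2)) := by
  have hp0 : (0 : ℝ) < p := by positivity
  have hp1 : (1 : ℝ) ≤ p := by exact_mod_cast Nat.one_le_of_lt hp
  set x : ℝ := (p : ℝ) ^ (-(1 : ℝ) / 2) with hx
  have hx0 : 0 ≤ x := Real.rpow_nonneg hp0.le _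
  have hx1 : x ≤ 1 := Real.rpow_le_one_of_one_le_of_nonpos hp1 (by norm_num)
  have key : (1 + x) ^ 4 - 1 ≤ 15 * x := by nlinarith [pow_nonneg hx0 2, pow_nonneg hx0 3]
  have h3 : (p : ℝ)⁻¹ * ((1 + x) ^ 4 - 1) ≤ 15 * (p : ℝ) ^ (-(3 : ℝ) / 2) := by
    have hinv : (p : ℝ)⁻¹ = (p : ℝ) ^ (-1 : ℝ) := by rw [Real.rpow_neg_one]
    have : (p : ℝ)⁻¹ * (15 * x) = 15 * (p : ℝ) ^ (-(3 : ℝ) / 2) := by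
      rw [hinv, hx, ← mul_assoc, mul_comm ((p:ℝ)^(-1:ℝ)) 15, mul_assoc,
        ← Real.rpow_add hp0]
      norm_num
    calc (p : ℝ)⁻¹ * ((1 + x) ^ 4 - 1) ≤ (p : ℝ)⁻¹ * (15 * x) := by
          exact mul_le_mul_of_nonneg_left key (by positivity)
      _ = 15 * (p : ℝ) ^ (-(3 : ℝ) / 2) := this
  calc 1 + (p : ℝ)⁻¹ * ((1 + x) ^ 4 - 1) ≤ 1 + 15 * (p : ℝ) ^ (-(3 : ℝ) / 2) := by linarith
    _ ≤ Real.exp (15 * (p : ℝ) ^ (-(3 : ℝ) / 2)) := by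
        have := Real.add_one_le_exp (15 * (p : ℝ) ^ (-(3 : ℝ) / 2))
        linarith

lemma prod_le_C {a : ℕ} (ha : a ≠ 0) :
    ∏ p ∈ a.primeFactors, (1 + (p : ℝ)⁻¹ * ((1 + (p : ℝ) ^ (-(1 : ℝ) / 2)) ^ 4 - 1))
      ≤ Real.exp (15 * ∑' n : ℕ, (n : ℝ) ^ (-(3 : ℝ) / 2)) := by
  have hsummable : Summable (fun n : ℕ => (n : ℝ) ^ (-(3 : ℝ) / 2)) :=
    Real.summable_nat_rpow.mpr (by norm_num)
  have step1 : ∏ p ∈ a.primeFactors, (1 + (p : ℝ)⁻¹ * ((1 + (p : ℝ) ^ (-(1 : ℝ) / 2)) ^ 4 - 1))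
      ≤ ∏ p ∈ a.primeFactors, Real.exp (15 * (p : ℝ) ^ (-(3 : ℝ) / 2)) := by
    refine Finset.prod_le_prod (fun p hp => ?_) (fun p hp => ?_)
    · have hp0 : (0:ℝ) ≤ p := by positivity
      have : (0:ℝ) ≤ (1 + (p : ℝ) ^ (-(1 : ℝ) / 2)) ^ 4 - 1 := by
        have h1y : (1:ℝ) ≤ 1 + (p : ℝ) ^ (-(1 : ℝ) / 2) := by
          have := Real.rpow_nonneg hp0 (-(1:ℝ)/2)
          linarith
        have : (1:ℝ) ≤ (1 + (p : ℝ) ^ (-(1 : ℝ) / 2)) ^ 4 := one_le_pow₀ h1y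
        linarith
      positivity
    · exact factor_le (Nat.prime_of_mem_primeFactors hp).two_le
  rw [← Real.exp_sum] at step1
  refine step1.trans (Real.exp_le_exp.mpr ?_)
  rw [← Finset.mul_sum]
  have hle : ∑ p ∈ a.primeFactors, (p : ℝ) ^ (-(3 : ℝ) / 2)
      ≤ ∑' n : ℕ, (n : ℝ) ^ (-(3 : ℝ) / 2) :=
    Summable.sum_le_tsum _ (fun n _ => Real.rpow_nonneg (by positivity) _) hsummable
  linarith

open Real in
/-- `Σ_{q ∣ a} φ(q) Π_{p ∣ a/q} (1 + p^{-1/2})⁴ = O(a)`, and for squarefree `a` the sum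
equals `a · Π_{p ∣ a} (1 + p⁻¹((1 + p^{-1/2})⁴ - 1))`. -/
theorem sum_totient_prod_bound :
    (∃ C : ℝ, 0 < C ∧ ∀ a : ℕ, 0 < a →
      ∑ q ∈ a.divisors, (Nat.totient q : ℝ) *
          ∏ p ∈ (a / q).primeFactors, (1 + (p : ℝ) ^ (-(1 : ℝ) / 2)) ^ 4 ≤ C * a) ∧
    ∀ a : ℕ, Squarefree a →
      ∑ q ∈ a.divisors, (Nat.totient q : ℝ) *
          ∏ p ∈ (a / q).primeFactors, (1 + (p : ℝ) ^ (-(1 : ℝ) / 2)) ^ 4 =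
        (a : ℝ) * ∏ p ∈ a.primeFactors,
          (1 + (p : ℝ)⁻¹ * ((1 + (p : ℝ) ^ (-(1 : ℝ) / 2)) ^ 4 - 1)) := by
  constructor
  · refine ⟨Real.exp (15 * ∑' n : ℕ, (n : ℝ) ^ (-(3 : ℝ) / 2)), Real.exp_pos _, fun a ha => ?_⟩
    rw [sum_eq_ffun ha, ffun_eq ha.ne']
    rw [mul_comm (Real.exp _) (a : ℝ)]
    exact mul_le_mul_of_nonneg_left (prod_le_C ha.ne') (by positivity)
  · intro a ha
    have ha0 : a ≠ 0 := by rintro rfl; exact not_squarefree_zero ha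
    rw [sum_eq_ffun (Nat.pos_of_ne_zero ha0), ffun_eq ha0]
end

section
/- For x ≥ 1 and a positive integer a, Σ_{n ≤ x, gcd(n,a)=1} 1/n = (φ(a)/a)·(log x + γ + Σ_{p|a} (log p)/(p-1)) + O(d(a)/x), where γ is the Euler–Mascheroni constant. -/
open Real Finset in
lemma harm_bound (y : ℝ) (hy : 1 ≤ y) :
    |(∑ m ∈ Finset.Icc 1 ⌊y⌋₊, (m : ℝ)⁻¹) - (Real.log y + eulerMascheroniConstant)| ≤ 2 / y := by
  set N := ⌊y⌋₊ with hN
  have hN1 : 1 ≤ N := Nat.one_le_floor_iff _ |>.mpr hy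
  have hNpos : (0:ℝ) < N := by exact_mod_cast hN1
  have hyN : (N:ℝ) ≤ y := Nat.floor_le (by linarith)
  have hyN' : y < N + 1 := Nat.lt_floor_add_one y
  have hH : (∑ m ∈ Finset.Icc 1 N, (m : ℝ)⁻¹) = (harmonic N : ℝ) := by
    rw [harmonic_eq_sum_Icc]
    push_cast
    rfl
  have h1 : (harmonic N : ℝ) - Real.log N - eulerMascheroniConstant > 0 := by
    have := eulerMascheroniConstant_lt_eulerMascheroniSeq' N
    rw [eulerMascheroniSeq', if_neg (by omega)] at this
    linarith
  have h2 : (harmonic N : ℝ) - Real.log N - eulerMascheroniConstant < Real.log (N+1) - Real.log N := by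
    have := eulerMascheroniSeq_lt_eulerMascheroniConstant N
    rw [eulerMascheroniSeq] at this
    linarith
  have hlog1 : Real.log N ≤ Real.log y := Real.log_le_log (by positivity) hyN
  have hlog2 : Real.log y ≤ Real.log (N+1) := Real.log_le_log (by linarith) (by linarith)
  have hgap : Real.log (N+1) - Real.log N ≤ 1 / N := by
    rw [← Real.log_div (by positivity) (by positivity)]
    have := Real.log_le_sub_one_of_pos (x := ((N:ℝ)+1)/N) (by positivity)
    have : Real.log (((N:ℝ)+1)/N) ≤ ((N:ℝ)+1)/N - 1 := this
    have heq : ((N:ℝ)+1)/N - 1 = 1/N := by field_simp; ring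
    linarith
  have hN1r : (1:ℝ) ≤ N := by exact_mod_cast hN1
  have hNy : 1 / (N:ℝ) ≤ 2 / y := by
    rw [div_le_div_iff₀ hNpos (by linarith)]
    linarith
  rw [hH, abs_le]
  constructor <;> nlinarith [Real.log_nonneg hy]
open Finset in
lemma L1 (s : Finset ℕ) (r : ℕ → ℝ) :
    ∑ S ∈ s.powerset, (-1:ℝ)^S.card * ∏ p ∈ S, r p = ∏ p ∈ s, (1 - r p) := by
  rw [Finset.prod_sub (fun _ => (1:ℝ)) r s]
  simp [mul_assoc]

open Finset in
lemma sum_powerset_insert' {α β : Type*} [DecidableEq α] [AddCommMonoid β] {s : Finset α} {a : α}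
    (h : a ∉ s) (f : Finset α → β) :
    ∑ t ∈ (insert a s).powerset, f t = ∑ t ∈ s.powerset, f t + ∑ t ∈ s.powerset, f (insert a t) := by
  rw [Finset.powerset_insert, Finset.sum_union, Finset.sum_image]
  · intro t ht u hu htu
    have hts : a ∉ t := fun hc => h (mem_powerset.mp ht hc)
    have hus : a ∉ u := fun hc => h (mem_powerset.mp hu hc)
    rw [← Finset.erase_insert hts, ← Finset.erase_insert hus, htu]
  · rw [Finset.disjoint_left]
    intro t ht htc
    obtain ⟨u, hu, rfl⟩ := mem_image.mp htc
    exact h (mem_powerset.mp ht (mem_insert_self a u))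

open Finset in
lemma L2 (r c : ℕ → ℝ) (s : Finset ℕ) :
    ∑ S ∈ s.powerset, (-1:ℝ)^S.card * (∑ p ∈ S, c p) * ∏ p ∈ S, r p
    = -∑ p ∈ s, c p * r p * ∏ q ∈ s.erase p, (1 - r q) := by
  induction s using Finset.induction_on with
  | empty => simp
  | @insert a s ha ih =>
    rw [sum_powerset_insert' ha, ih]
    have h2 : ∑ t ∈ s.powerset, ((-1:ℝ)^(insert a t).card * (∑ p ∈ insert a t, c p) * ∏ p ∈ insert a t, r p)
        = (-(r a)) * ((c a) * (∑ t ∈ s.powerset, (-1:ℝ)^t.card * ∏ p ∈ t, r p)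
            + ∑ t ∈ s.powerset, (-1:ℝ)^t.card * (∑ p ∈ t, c p) * ∏ p ∈ t, r p) := by
      rw [Finset.mul_sum, mul_add, Finset.mul_sum, Finset.mul_sum, ← Finset.sum_add_distrib]
      refine Finset.sum_congr rfl fun t ht => ?_
      have hat : a ∉ t := fun hc => ha (Finset.mem_powerset.mp ht hc)
      rw [Finset.card_insert_of_notMem hat, Finset.sum_insert hat, Finset.prod_insert hat]
      ring
    rw [h2, L1, ih]
    rw [Finset.sum_insert ha, Finset.erase_insert ha]
    have h3 : ∑ p ∈ s, c p * r p * ∏ q ∈ (insert a s).erase p, (1 - r q)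
        = (1 - r a) * ∑ p ∈ s, c p * r p * ∏ q ∈ s.erase p, (1 - r q) := by
      rw [Finset.mul_sum]
      refine Finset.sum_congr rfl fun p hp => ?_
      have hap : a ≠ p := fun hc => ha (hc ▸ hp)
      have hne : p ≠ a := fun hc => ha (hc ▸ hp)
      rw [Finset.erase_insert_of_ne hne.symm, Finset.prod_insert (fun hc => ha (Finset.erase_subset _ _ hc))]
      ring
    rw [h3]
    ring
open Finset in
lemma moebius_prod_primes {S : Finset ℕ} (hS : ∀ p ∈ S, p.Prime) :
    (ArithmeticFunction.moebius (∏ p ∈ S, p) : ℝ) = (-1:ℝ)^S.card := by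
  rw [ArithmeticFunction.IsMultiplicative.map_prod_of_prime
        ArithmeticFunction.isMultiplicative_moebius S hS]
  push_cast
  rw [Finset.prod_congr rfl (fun p hp => by
    rw [ArithmeticFunction.moebius_apply_prime (hS p hp)])]
  simp

open Finset in
lemma div_to_powerset (a : ℕ) (ha : a ≠ 0) (f : ℕ → ℝ) :
    ∑ d ∈ a.divisors, (ArithmeticFunction.moebius d : ℝ) * f d
    = ∑ S ∈ a.primeFactors.powerset, (-1:ℝ)^S.card * f (∏ p ∈ S, p) := by
  classical
  rw [← Finset.sum_filter_of_ne (p := fun d => Squarefree d) (fun x _ hx => by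
    by_contra hsq
    rw [ArithmeticFunction.moebius_eq_zero_of_not_squarefree hsq] at hx
    simp at hx)]
  rw [Nat.sum_divisors_filter_squarefree ha]
  have hfin : (UniqueFactorizationMonoid.normalizedFactors a).toFinset = a.primeFactors := by
    rw [Nat.factors_eq]
    rfl
  rw [hfin]
  refine Finset.sum_congr rfl fun S hS => ?_
  have hSsub : S ⊆ a.primeFactors := Finset.mem_powerset.mp hS
  have hP : ∀ p ∈ S, p.Prime := fun p hp => Nat.prime_of_mem_primeFactors (hSsub hp)
  have hval : S.val.prod = ∏ p ∈ S, p := by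
    rw [Finset.prod_eq_multiset_prod, Multiset.map_id']
  rw [hval, moebius_prod_primes hP]

open Finset in
lemma innerDivSum (d N : ℕ) (hd : 0 < d) :
    ∑ n ∈ (Finset.Icc 1 N).filter (d ∣ ·), (n:ℝ)⁻¹
      = (d:ℝ)⁻¹ * ∑ m ∈ Finset.Icc 1 (N / d), (m:ℝ)⁻¹ := by
  have hmap : (Finset.Icc 1 N).filter (d ∣ ·)
      = (Finset.Icc 1 (N/d)).map ⟨fun m => d * m,
          fun m₁ m₂ h => Nat.eq_of_mul_eq_mul_left hd h⟩ := by
    ext n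
    simp only [Finset.mem_filter, Finset.mem_Icc, Finset.mem_map, Function.Embedding.coeFn_mk]
    constructor
    · rintro ⟨⟨h1, h2⟩, m, rfl⟩
      refine ⟨m, ⟨?_, ?_⟩, rfl⟩
      · rcases Nat.eq_zero_or_pos m with rfl | hm
        · omega
        · exact hm
      · rw [Nat.le_div_iff_mul_le hd, Nat.mul_comm]; omega
    · rintro ⟨m, ⟨hm1, hm2⟩, rfl⟩
      rw [Nat.le_div_iff_mul_le hd, Nat.mul_comm] at hm2
      exact ⟨⟨by show 1 ≤ d * m; nlinarith, by show d * m ≤ N; omega⟩, m, rfl⟩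
  rw [hmap, Finset.sum_map, Finset.mul_sum]
  refine Finset.sum_congr rfl fun m hm => ?_
  show ((d * m : ℕ) : ℝ)⁻¹ = (d:ℝ)⁻¹ * (m:ℝ)⁻¹
  push_cast
  rw [mul_inv]

open Real in
/-- `Σ_{n ≤ x, (n,a)=1} 1/n = (φ(a)/a)(log x + γ + Σ_{p ∣ a} log p/(p-1)) + O(d(a)/x)`. -/
theorem sum_reciprocal_coprime :
    ∃ C : ℝ, 0 < C ∧ ∀ a : ℕ, 0 < a → ∀ x : ℝ, 1 ≤ x →
      |(∑ n ∈ Finset.Icc 1 ⌊x⌋₊, if Nat.gcd n a = 1 then (n : ℝ)⁻¹ else 0) -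
        (Nat.totient a : ℝ) / a *
          (Real.log x + eulerMascheroniConstant +
            ∑ p ∈ a.primeFactors, Real.log p / ((p : ℝ) - 1))| ≤
        C * a.divisors.card / x := by
  classical
  refine ⟨2, by norm_num, fun a ha x hx => ?_⟩
  have ha' : a ≠ 0 := ha.ne'
  set N := ⌊x⌋₊ with hNdef
  set γ := eulerMascheroniConstant with hγdef
  set P := a.primeFactors with hPdef
  -- γ bounds
  have hγ0 : 0 < γ := by
    have := eulerMascheroniSeq_lt_eulerMascheroniConstant 0
    rwa [eulerMascheroniSeq_zero] at this
  have hγ1 : γ < 1 := by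
    have := eulerMascheroniConstant_lt_eulerMascheroniSeq' 1
    rwa [eulerMascheroniSeq'_one] at this
  -- Step 1: Möbius inversion
  have step1 : (∑ n ∈ Finset.Icc 1 N, if Nat.gcd n a = 1 then (n : ℝ)⁻¹ else 0)
      = ∑ d ∈ a.divisors, (ArithmeticFunction.moebius d : ℝ) *
          ((d:ℝ)⁻¹ * ∑ m ∈ Finset.Icc 1 ⌊x / d⌋₊, (m:ℝ)⁻¹) := by
    have key : ∀ n ∈ Finset.Icc 1 N, (if Nat.gcd n a = 1 then (n : ℝ)⁻¹ else 0)
        = ∑ d ∈ a.divisors.filter (· ∣ n), (ArithmeticFunction.moebius d : ℝ) * (n:ℝ)⁻¹ := by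
      intro n hn
      have hn1 : 1 ≤ n := (Finset.mem_Icc.mp hn).1
      have h1 : ((ArithmeticFunction.moebius * ↑ArithmeticFunction.zeta :
            ArithmeticFunction ℤ) (Nat.gcd n a))
          = ∑ d ∈ (Nat.gcd n a).divisors, ArithmeticFunction.moebius d :=
        ArithmeticFunction.coe_mul_zeta_apply
      rw [ArithmeticFunction.moebius_mul_coe_zeta, ArithmeticFunction.one_apply] at h1
      have h2 : (Nat.gcd n a).divisors = a.divisors.filter (· ∣ n) := by
        ext d
        simp only [Nat.mem_divisors, Finset.mem_filter, Nat.dvd_gcd_iff]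
        constructor
        · rintro ⟨⟨hdn, hda⟩, _⟩; exact ⟨⟨hda, ha'⟩, hdn⟩
        · rintro ⟨⟨hda, _⟩, hdn⟩
          exact ⟨⟨hdn, hda⟩, fun h => ha' ((Nat.gcd_eq_zero_iff.mp h).2)⟩
      rw [h2] at h1
      rw [← Finset.sum_mul]
      have h3 : (∑ d ∈ a.divisors.filter (· ∣ n), (ArithmeticFunction.moebius d : ℝ))
          = if Nat.gcd n a = 1 then 1 else 0 := by
        by_cases hg : Nat.gcd n a = 1
        · rw [if_pos hg] at h1 ⊢; exact_mod_cast h1.symm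
        · rw [if_neg hg] at h1 ⊢; exact_mod_cast h1.symm
      rw [h3]
      split <;> simp
    rw [Finset.sum_congr rfl key]
    simp_rw [Finset.sum_filter]
    rw [Finset.sum_comm]
    refine Finset.sum_congr rfl fun d hd => ?_
    have hd0 : 0 < d := Nat.pos_of_mem_divisors hd
    rw [← Finset.sum_filter, ← Finset.mul_sum, innerDivSum d N hd0, ← Nat.floor_div_natCast x d]
  have hx0 : (0:ℝ) < x := by linarith
  -- Step 2 : per-term error bound
  have errbound : ∀ d ∈ a.divisors,
      |(ArithmeticFunction.moebius d : ℝ) * ((d:ℝ)⁻¹ * ∑ m ∈ Finset.Icc 1 ⌊x / d⌋₊, (m:ℝ)⁻¹)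
        - (ArithmeticFunction.moebius d : ℝ) * ((d:ℝ)⁻¹ * (Real.log (x / d) + γ))| ≤ 2 / x := by
    intro d hd
    have hd0 : 0 < d := Nat.pos_of_mem_divisors hd
    have hd1 : (1:ℝ) ≤ d := by exact_mod_cast hd0
    have hdr : (0:ℝ) < d := by linarith
    have hmu : |(ArithmeticFunction.moebius d : ℝ)| ≤ 1 := by
      have : |(ArithmeticFunction.moebius d : ℤ)| ≤ 1 := by
        rcases em (Squarefree d) with h | h
        · rw [ArithmeticFunction.abs_moebius_eq_one_of_squarefree h]
        · rw [ArithmeticFunction.moebius_eq_zero_of_not_squarefree h]; norm_num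
      calc |(ArithmeticFunction.moebius d : ℝ)| = ((|(ArithmeticFunction.moebius d : ℤ)| : ℤ) : ℝ) := by
            push_cast; rfl
        _ ≤ 1 := by exact_mod_cast this
    rw [← mul_sub, ← mul_sub, abs_mul, abs_mul, abs_inv, Nat.abs_cast]
    have hinner : (d:ℝ)⁻¹ * |(∑ m ∈ Finset.Icc 1 ⌊x / d⌋₊, (m:ℝ)⁻¹) - (Real.log (x / d) + γ)|
        ≤ 2 / x := by
      rcases le_or_gt 1 (x / d) with hcase | hcase
      · have hb := harm_bound (x / d) hcase
        calc (d:ℝ)⁻¹ * |(∑ m ∈ Finset.Icc 1 ⌊x / d⌋₊, (m:ℝ)⁻¹) - (Real.log (x / d) + γ)|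
            ≤ (d:ℝ)⁻¹ * (2 / (x / d)) := by
              apply mul_le_mul_of_nonneg_left hb (by positivity)
          _ = 2 / x := by field_simp
      · have hfloor : ⌊x / d⌋₊ = 0 := Nat.floor_eq_zero.mpr hcase
        rw [hfloor]
        have hxd : x < d := by
          by_contra hcon
          push_neg at hcon
          exact absurd ((le_div_iff₀ hdr).mpr (by linarith)) (not_le.mpr hcase)
        have hlog : Real.log (x / d) = Real.log x - Real.log d :=
          Real.log_div (by positivity) (by positivity)
        have hL : 0 ≤ Real.log d - Real.log x := by
          have := Real.log_le_log (by positivity) (le_of_lt hxd)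
          linarith
        have hLle : Real.log d - Real.log x ≤ d / x := by
          have h1 : Real.log d - Real.log x = Real.log (d / x) :=
            (Real.log_div (by positivity) (by positivity)).symm
          have h2 := Real.log_le_sub_one_of_pos (x := (d:ℝ)/x) (by positivity)
          have h3 : (d:ℝ)/x - 1 ≤ d/x := by linarith
          linarith
        have habs : |(∑ m ∈ (Finset.Icc 1 0 : Finset ℕ), (m:ℝ)⁻¹) - (Real.log (x / d) + γ)|
            ≤ (Real.log d - Real.log x) + γ := by
          simp only [Finset.Icc_eq_empty_of_lt (by norm_num : (0:ℕ) < 1), Finset.sum_empty]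
          rw [hlog, abs_le]
          constructor <;> nlinarith
        have hdx : (d:ℝ)⁻¹ ≤ x⁻¹ := by
          apply inv_anti₀ hx0 (le_of_lt hxd)
        calc (d:ℝ)⁻¹ * |(∑ m ∈ (Finset.Icc 1 0 : Finset ℕ), (m:ℝ)⁻¹) - (Real.log (x / d) + γ)|
            ≤ (d:ℝ)⁻¹ * ((Real.log d - Real.log x) + γ) :=
              mul_le_mul_of_nonneg_left habs (by positivity)
          _ = (d:ℝ)⁻¹ * (Real.log d - Real.log x) + (d:ℝ)⁻¹ * γ := by ring
          _ ≤ (d:ℝ)⁻¹ * (d / x) + x⁻¹ * 1 := by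
              have h1 : (d:ℝ)⁻¹ * (Real.log d - Real.log x) ≤ (d:ℝ)⁻¹ * (d / x) :=
                mul_le_mul_of_nonneg_left hLle (by positivity)
              have h2 : (d:ℝ)⁻¹ * γ ≤ x⁻¹ * 1 := by
                calc (d:ℝ)⁻¹ * γ ≤ x⁻¹ * γ := mul_le_mul_of_nonneg_right hdx (le_of_lt hγ0)
                  _ ≤ x⁻¹ * 1 := mul_le_mul_of_nonneg_left (le_of_lt hγ1) (by positivity)
              linarith
          _ = 1 / x + 1 / x := by field_simp
          _ = 2 / x := by ring
    calc |(ArithmeticFunction.moebius d : ℝ)| * ((d:ℝ)⁻¹ *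
          |(∑ m ∈ Finset.Icc 1 ⌊x / d⌋₊, (m:ℝ)⁻¹) - (Real.log (x / d) + γ)|)
        ≤ 1 * (2 / x) := by
          apply mul_le_mul hmu hinner (by positivity) (by norm_num)
      _ = 2 / x := by ring
  -- Step 3 : the main-term identity
  have hprimes : ∀ p ∈ P, Nat.Prime p := fun p hp => Nat.prime_of_mem_primeFactors hp
  have htot : ((Nat.totient a : ℝ) / a) = ∏ p ∈ P, (1 - (p:ℝ)⁻¹) := by
    have hQ := Nat.totient_eq_mul_prod_factors a
    have hR : (Nat.totient a : ℝ) = a * ∏ p ∈ P, (1 - (p:ℝ)⁻¹) := by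
      have := congrArg (fun q : ℚ => (q : ℝ)) hQ
      push_cast at this
      exact this
    rw [hR]
    field_simp
  have hT0 : (∑ d ∈ a.divisors, (ArithmeticFunction.moebius d : ℝ) * (d:ℝ)⁻¹)
      = (Nat.totient a : ℝ) / a := by
    rw [div_to_powerset a ha' (fun d => (d:ℝ)⁻¹), htot, ← L1 P (fun p => (p:ℝ)⁻¹)]
    refine Finset.sum_congr rfl fun S hS => ?_
    rw [Nat.cast_prod, ← Finset.prod_inv_distrib]
  have hT1 : (∑ d ∈ a.divisors, (ArithmeticFunction.moebius d : ℝ) * ((d:ℝ)⁻¹ * Real.log d))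
      = -∑ p ∈ P, Real.log p * (p:ℝ)⁻¹ * ∏ q ∈ P.erase p, (1 - (q:ℝ)⁻¹) := by
    rw [div_to_powerset a ha' (fun d => (d:ℝ)⁻¹ * Real.log d),
      ← L2 (fun p => (p:ℝ)⁻¹) (fun p => Real.log p) P]
    refine Finset.sum_congr rfl fun S hS => ?_
    have hSP : S ⊆ P := Finset.mem_powerset.mp hS
    have hlogp : Real.log ((∏ p ∈ S, p : ℕ) : ℝ) = ∑ p ∈ S, Real.log p := by
      rw [Nat.cast_prod]
      rw [Real.log_prod (fun p hp => by
        have := (hprimes p (hSP hp)).pos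
        positivity)]
    rw [hlogp, Nat.cast_prod, ← Finset.prod_inv_distrib]
    ring
  have hsum2 : (∑ p ∈ P, Real.log p * (p:ℝ)⁻¹ * ∏ q ∈ P.erase p, (1 - (q:ℝ)⁻¹))
      = (Nat.totient a : ℝ) / a * ∑ p ∈ P, Real.log p / ((p:ℝ) - 1) := by
    rw [htot, Finset.mul_sum]
    refine Finset.sum_congr rfl fun p hp => ?_
    have hp2 : 2 ≤ p := (hprimes p hp).two_le
    have hp2r : (2:ℝ) ≤ p := by exact_mod_cast hp2
    have hp0 : (p:ℝ) ≠ 0 := by linarith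
    have hp1 : (p:ℝ) - 1 ≠ 0 := by linarith
    rw [← Finset.mul_prod_erase P _ hp]
    have key : Real.log p * (p:ℝ)⁻¹ = (1 - (p:ℝ)⁻¹) * (Real.log p / ((p:ℝ) - 1)) := by
      field_simp
    calc Real.log p * (p:ℝ)⁻¹ * ∏ q ∈ P.erase p, (1 - (q:ℝ)⁻¹)
        = ((1 - (p:ℝ)⁻¹) * (Real.log p / ((p:ℝ) - 1))) * ∏ q ∈ P.erase p, (1 - (q:ℝ)⁻¹) := by
          rw [key]
      _ = (1 - (p:ℝ)⁻¹) * (∏ q ∈ P.erase p, (1 - (q:ℝ)⁻¹)) * (Real.log p / ((p:ℝ) - 1)) := by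
          ring
  have hM' : (∑ d ∈ a.divisors, (ArithmeticFunction.moebius d : ℝ) *
        ((d:ℝ)⁻¹ * (Real.log (x / d) + γ)))
      = (Nat.totient a : ℝ) / a *
          (Real.log x + γ + ∑ p ∈ P, Real.log p / ((p:ℝ) - 1)) := by
    have hsplit : ∀ d ∈ a.divisors, (ArithmeticFunction.moebius d : ℝ) *
          ((d:ℝ)⁻¹ * (Real.log (x / d) + γ))
        = (ArithmeticFunction.moebius d : ℝ) * (d:ℝ)⁻¹ * (Real.log x + γ)
          - (ArithmeticFunction.moebius d : ℝ) * ((d:ℝ)⁻¹ * Real.log d) := by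
      intro d hd
      have hd0 : 0 < d := Nat.pos_of_mem_divisors hd
      rw [Real.log_div (by positivity) (by exact_mod_cast hd0.ne')]
      ring
    rw [Finset.sum_congr rfl hsplit, Finset.sum_sub_distrib, ← Finset.sum_mul, hT0, hT1,
      hsum2]
    ring
  -- Final assembly
  rw [step1, ← hM', ← Finset.sum_sub_distrib]
  calc |∑ d ∈ a.divisors, ((ArithmeticFunction.moebius d : ℝ) *
          ((d:ℝ)⁻¹ * ∑ m ∈ Finset.Icc 1 ⌊x / d⌋₊, (m:ℝ)⁻¹)
        - (ArithmeticFunction.moebius d : ℝ) * ((d:ℝ)⁻¹ * (Real.log (x / d) + γ)))|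
      ≤ ∑ d ∈ a.divisors, |(ArithmeticFunction.moebius d : ℝ) *
          ((d:ℝ)⁻¹ * ∑ m ∈ Finset.Icc 1 ⌊x / d⌋₊, (m:ℝ)⁻¹)
        - (ArithmeticFunction.moebius d : ℝ) * ((d:ℝ)⁻¹ * (Real.log (x / d) + γ))| :=
        Finset.abs_sum_le_sum_abs _ _
    _ ≤ ∑ _d ∈ a.divisors, 2 / x := Finset.sum_le_sum errbound
    _ = a.divisors.card * (2 / x) := by rw [Finset.sum_const, nsmul_eq_mul]
    _ = 2 * a.divisors.card / x := by ring
end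

section
/- For a positive integer a, Σ_{p|a} ((3p+1)/(p-1)²)·log p = O(log log(3a)); i.e., there is an absolute constant C with Σ_{p|a} ((3p+1)/(p-1)²)·log p ≤ C·log log(3a). -/
open Finset

lemma exp_le_aux (x : ℝ) (h1 : x < 1) : Real.exp x ≤ (1 - x)⁻¹ := by
  have h := Real.add_one_le_exp (-x)
  rw [Real.exp_neg] at h
  have h2 : 1 - x ≤ (Real.exp x)⁻¹ := by linarith
  have h3 : 0 < 1 - x := by linarith
  calc Real.exp x = ((Real.exp x)⁻¹)⁻¹ := by rw [inv_inv]
    _ ≤ (1 - x)⁻¹ := by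
        apply inv_anti₀ h3 h2

lemma log3_lb : (1.05 : ℝ) ≤ Real.log 3 := by
  rw [Real.le_log_iff_exp_le (by norm_num)]
  have : Real.exp 1.05 = Real.exp 1 * Real.exp 0.05 := by
    rw [← Real.exp_add]; norm_num
  rw [this]
  have h1 := Real.exp_one_lt_d9
  have h2 : Real.exp 0.05 ≤ (1 - 0.05 : ℝ)⁻¹ := exp_le_aux _ (by norm_num)
  have h3 : (0:ℝ) < Real.exp 0.05 := Real.exp_pos _
  nlinarith

lemma log105_lb : (0.04 : ℝ) ≤ Real.log 1.05 := by
  rw [Real.le_log_iff_exp_le (by norm_num)]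
  have h2 : Real.exp 0.04 ≤ (1 - 0.04 : ℝ)⁻¹ := exp_le_aux _ (by norm_num)
  have : ((1 : ℝ) - 0.04)⁻¹ ≤ 1.05 := by norm_num
  linarith

lemma sum_log_primes_le (N : ℕ) (s : Finset ℕ) (hs : ∀ p ∈ s, p.Prime ∧ p ≤ N) :
    ∑ p ∈ s, Real.log p ≤ N * Real.log 4 := by
  have hsub : s ⊆ (range (N + 1)).filter Nat.Prime := by
    intro p hp
    simp only [mem_filter, mem_range]
    exact ⟨Nat.lt_succ_of_le (hs p hp).2, (hs p hp).1⟩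
  have hprod : (∏ p ∈ s, p) ≤ primorial N := by
    apply Finset.prod_le_prod_of_subset_of_one_le' hsub
    intro i hi _
    exact (by simp at hi; exact hi.2.one_lt.le : 1 ≤ i)
  have h4 : (∏ p ∈ s, p) ≤ 4 ^ N := hprod.trans (primorial_le_4_pow N)
  have hlog : ∑ p ∈ s, Real.log p = Real.log (∏ p ∈ s, (p : ℝ)) := by
    rw [Real.log_prod]
    intro p hp
    exact_mod_cast (hs p hp).1.pos.ne'
  rw [hlog]
  have : (∏ p ∈ s, (p : ℝ)) = ((∏ p ∈ s, p : ℕ) : ℝ) := by push_cast; ring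
  rw [this]
  calc Real.log ((∏ p ∈ s, p : ℕ) : ℝ) ≤ Real.log ((4 : ℝ) ^ N) := by
        apply Real.log_le_log (by exact_mod_cast Finset.prod_pos fun p hp => (hs p hp).1.pos)
        exact_mod_cast h4
    _ = N * Real.log 4 := by rw [Real.log_pow]

lemma block_bound (H : Finset ℕ) (hH : ∀ p ∈ H, p.Prime) (j : ℕ) :
    ∑ p ∈ H.filter (fun p => Nat.log 2 p = j), Real.log p / p ≤ 4 * Real.log 2 := by
  set B := H.filter (fun p => Nat.log 2 p = j) with hB
  have hmem : ∀ p ∈ B, p.Prime ∧ 2 ^ j ≤ p ∧ p < 2 ^ (j + 1) := by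
    intro p hp
    rw [hB, mem_filter] at hp
    have hprime := hH p hp.1
    have h1 : 2 ^ j ≤ p := hp.2 ▸ Nat.pow_log_le_self 2 hprime.pos.ne'
    have h2 : p < 2 ^ (j + 1) := hp.2 ▸ Nat.lt_pow_succ_log_self (by norm_num) p
    exact ⟨hprime, h1, h2⟩
  have step1 : ∑ p ∈ B, Real.log p / p ≤ ∑ p ∈ B, Real.log p / 2 ^ j := by
    apply Finset.sum_le_sum
    intro p hp
    obtain ⟨hprime, h1, _⟩ := hmem p hp
    apply div_le_div_of_nonneg_left (Real.log_natCast_nonneg p) (by positivity)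
    exact_mod_cast h1
  have step2 : ∑ p ∈ B, Real.log p / 2 ^ j = (∑ p ∈ B, Real.log p) / 2 ^ j := by
    rw [Finset.sum_div]
  have step3 : (∑ p ∈ B, Real.log p) ≤ (2 ^ (j + 1) : ℕ) * Real.log 4 :=
    sum_log_primes_le (2 ^ (j + 1)) B (fun p hp => ⟨(hmem p hp).1, (hmem p hp).2.2.le⟩)
  have h2j : (0:ℝ) < 2 ^ j := by positivity
  have hlog4 : Real.log 4 = 2 * Real.log 2 := by
    rw [show (4:ℝ) = 2 ^ 2 by norm_num, Real.log_pow]; push_cast; ring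
  calc ∑ p ∈ B, Real.log p / p ≤ (∑ p ∈ B, Real.log p) / 2 ^ j := by
        rw [← step2]; exact step1
    _ ≤ ((2 ^ (j + 1) : ℕ) * Real.log 4) / 2 ^ j := by
        gcongr
    _ = 4 * Real.log 2 := by
        push_cast
        rw [pow_succ, hlog4]
        field_simp
        ring

lemma head_bound (S : Finset ℕ) (hS : ∀ p ∈ S, p.Prime) (L : ℝ) (hL : 1 ≤ L) :
    ∑ p ∈ S.filter (fun p : ℕ => (p:ℝ) ≤ L), Real.log p / p
      ≤ 4 * Real.log L + 8 * Real.log 2 := by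
  set H := S.filter (fun p : ℕ => (p:ℝ) ≤ L) with hHdef
  have hH : ∀ p ∈ H, p.Prime := fun p hp => hS p (mem_filter.mp hp).1
  set Jm := Nat.log 2 ⌊L⌋₊ with hJm
  have hmaps : ∀ p ∈ H, Nat.log 2 p ∈ range (Jm + 1) := by
    intro p hp
    rw [mem_range, Nat.lt_succ_iff, hJm]
    exact Nat.log_mono_right (Nat.le_floor (mem_filter.mp hp).2)
  have hfib := Finset.sum_fiberwise_of_maps_to hmaps (fun p => Real.log p / p)
  rw [← hfib]
  have hblocks : ∑ j ∈ range (Jm + 1),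
      ∑ p ∈ H.filter (fun p => Nat.log 2 p = j), Real.log p / p
      ≤ ∑ j ∈ range (Jm + 1), 4 * Real.log 2 :=
    Finset.sum_le_sum fun j _ => block_bound H hH j
  have hconst : ∑ j ∈ range (Jm + 1), (4 : ℝ) * Real.log 2 = (Jm + 1) * (4 * Real.log 2) := by
    rw [Finset.sum_const, card_range]; push_cast; ring
  have hJmle : (Jm : ℝ) * Real.log 2 ≤ Real.log L := by
    have hfl : 1 ≤ ⌊L⌋₊ := (Nat.one_le_floor_iff L).mpr hL
    have hpow : 2 ^ Jm ≤ ⌊L⌋₊ := Nat.pow_log_le_self 2 (by omega)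
    have hpowR : (2:ℝ) ^ Jm ≤ L := by
      calc ((2:ℝ) ^ Jm) = ((2 ^ Jm : ℕ) : ℝ) := by push_cast; ring
        _ ≤ (⌊L⌋₊ : ℝ) := by exact_mod_cast hpow
        _ ≤ L := Nat.floor_le (by linarith)
    calc (Jm : ℝ) * Real.log 2 = Real.log ((2:ℝ) ^ Jm) := by rw [Real.log_pow]
      _ ≤ Real.log L := Real.log_le_log (by positivity) hpowR
  have hlog2pos : (0:ℝ) < Real.log 2 := Real.log_pos (by norm_num)
  calc ∑ j ∈ range (Jm + 1), ∑ p ∈ H.filter (fun p => Nat.log 2 p = j), Real.log p / p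
      ≤ (Jm + 1) * (4 * Real.log 2) := by rw [← hconst]; exact hblocks
    _ = 4 * ((Jm:ℝ) * Real.log 2) + 4 * Real.log 2 := by ring
    _ ≤ 4 * Real.log L + 8 * Real.log 2 := by nlinarith

lemma sum_log_primeFactors_le (a : ℕ) (ha : 0 < a) :
    ∑ p ∈ a.primeFactors, Real.log p ≤ Real.log a := by
  have hdvd := Nat.prod_primeFactors_dvd a
  have hle : (∏ p ∈ a.primeFactors, p) ≤ a := Nat.le_of_dvd ha hdvd
  have hlog : ∑ p ∈ a.primeFactors, Real.log p
      = Real.log ((∏ p ∈ a.primeFactors, p : ℕ) : ℝ) := by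
    push_cast
    rw [Real.log_prod]
    intro p hp
    exact_mod_cast (Nat.prime_of_mem_primeFactors hp).pos.ne'
  rw [hlog]
  exact Real.log_le_log (by exact_mod_cast Finset.prod_pos fun p hp =>
    (Nat.prime_of_mem_primeFactors hp).pos) (by exact_mod_cast hle)

lemma term_le (p : ℕ) (hp : 2 ≤ p) :
    (3 * (p : ℝ) + 1) / ((p : ℝ) - 1) ^ 2 * Real.log p ≤ 14 * (Real.log p / p) := by
  have hp' : (2 : ℝ) ≤ p := by exact_mod_cast hp
  have hlog : 0 ≤ Real.log p := Real.log_nonneg (by linarith)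
  rw [show (14:ℝ) * (Real.log p / p) = 14 / p * Real.log p by ring]
  apply mul_le_mul_of_nonneg_right _ hlog
  rw [div_le_div_iff₀ (by nlinarith) (by linarith)]
  nlinarith

/-- `Σ_{p ∣ a} ((3p+1)/(p-1)²) log p = O(log log (3a))`. -/
theorem sum_over_prime_factors_loglog :
    ∃ C : ℝ, 0 < C ∧ ∀ a : ℕ, 0 < a →
      ∑ p ∈ a.primeFactors, (3 * (p : ℝ) + 1) / ((p : ℝ) - 1) ^ 2 * Real.log p ≤
        C * Real.log (Real.log (3 * a)) := by
  refine ⟨3000, by norm_num, fun a ha => ?_⟩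
  set S := a.primeFactors with hS
  have hSp : ∀ p ∈ S, p.Prime := fun p hp => Nat.prime_of_mem_primeFactors hp
  set L := Real.log (3 * (a : ℝ)) with hLdef
  have ha1 : (1:ℝ) ≤ a := by exact_mod_cast ha
  have hL3 : Real.log 3 ≤ L := Real.log_le_log (by norm_num) (by linarith)
  have hL1 : (1.05:ℝ) ≤ L := log3_lb.trans hL3
  have hLpos : (0:ℝ) < L := by linarith
  have hX : (0.04:ℝ) ≤ Real.log L :=
    log105_lb.trans (Real.log_le_log (by norm_num) hL1)
  -- step 1: termwise
  have step1 : ∑ p ∈ S, (3 * (p : ℝ) + 1) / ((p : ℝ) - 1) ^ 2 * Real.log p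
      ≤ 14 * ∑ p ∈ S, Real.log p / p := by
    rw [Finset.mul_sum]
    exact Finset.sum_le_sum fun p hp => term_le p (hSp p hp).two_le
  -- split
  have hsplit := Finset.sum_filter_add_sum_filter_not S (fun p : ℕ => (p:ℝ) ≤ L)
      (fun p : ℕ => Real.log p / p)
  -- tail bound
  have htail : ∑ p ∈ S.filter (fun p : ℕ => ¬ (p:ℝ) ≤ L), Real.log p / p ≤ 1 := by
    have h1 : ∀ p ∈ S.filter (fun p : ℕ => ¬ (p:ℝ) ≤ L),
        Real.log p / p ≤ Real.log p / L := by
      intro p hp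
      have hLp : L ≤ p := le_of_not_ge (mem_filter.mp hp).2
      exact div_le_div_of_nonneg_left (Real.log_natCast_nonneg p) hLpos hLp
    calc ∑ p ∈ S.filter (fun p : ℕ => ¬ (p:ℝ) ≤ L), Real.log p / p
        ≤ ∑ p ∈ S.filter (fun p : ℕ => ¬ (p:ℝ) ≤ L), Real.log p / L :=
          Finset.sum_le_sum h1
      _ ≤ ∑ p ∈ S, Real.log p / L := by
          apply Finset.sum_le_sum_of_subset_of_nonneg (Finset.filter_subset _ _)
          intro p hp _
          exact div_nonneg (Real.log_natCast_nonneg p) hLpos.le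
      _ = (∑ p ∈ S, Real.log p) / L := by rw [Finset.sum_div]
      _ ≤ Real.log a / L := by
          gcongr
          exact sum_log_primeFactors_le a ha
      _ ≤ L / L := by
          gcongr
          exact Real.log_le_log (by exact_mod_cast ha) (by linarith)
      _ ≤ 1 := by rw [div_self hLpos.ne']
  have hhead := head_bound S hSp L (by linarith)
  have hlog2 : Real.log 2 < 0.6931471808 := Real.log_two_lt_d9
  have hlog2pos : (0:ℝ) < Real.log 2 := Real.log_pos (by norm_num)
  calc ∑ p ∈ S, (3 * (p : ℝ) + 1) / ((p : ℝ) - 1) ^ 2 * Real.log p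
      ≤ 14 * ∑ p ∈ S, Real.log p / p := step1
    _ = 14 * (∑ p ∈ S.filter (fun p : ℕ => (p:ℝ) ≤ L), Real.log p / p
          + ∑ p ∈ S.filter (fun p : ℕ => ¬ (p:ℝ) ≤ L), Real.log p / p) := by
        rw [hsplit]
    _ ≤ 14 * ((4 * Real.log L + 8 * Real.log 2) + 1) := by
        have := add_le_add hhead htail
        nlinarith
    _ ≤ 3000 * Real.log L := by nlinarith
end

section
/- For n coprime to a, R(n;a) = (1/φ(a)) · Σ_{χ mod a} conj(χ)(−n) · Σ_{u | n²} χ(u), where the outer sum is over all Dirichlet characters mod a. -/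
open Finset

/-- The solution set rewritten as a natural-number equation. -/
lemma sol_set_eq (a n : ℕ) (ha : 0 < a) (hn : 0 < n) :
    {p : ℕ × ℕ | 0 < p.1 ∧ 0 < p.2 ∧ (a : ℚ) / n = 1 / p.1 + 1 / p.2} =
      {p : ℕ × ℕ | 0 < p.1 ∧ 0 < p.2 ∧ a * p.1 * p.2 = n * (p.1 + p.2)} := by
  ext ⟨x, y⟩
  simp only [Set.mem_setOf_eq]
  constructor
  · rintro ⟨hx, hy, h⟩
    refine ⟨hx, hy, ?_⟩
    have hx' : (x : ℚ) ≠ 0 := Nat.cast_ne_zero.mpr hx.ne'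
    have hy' : (y : ℚ) ≠ 0 := Nat.cast_ne_zero.mpr hy.ne'
    have hn' : (n : ℚ) ≠ 0 := Nat.cast_ne_zero.mpr hn.ne'
    field_simp at h
    have : (a : ℚ) * x * y = n * (x + y) := by linarith [h]
    exact_mod_cast this
  · rintro ⟨hx, hy, h⟩
    refine ⟨hx, hy, ?_⟩
    have hx' : (x : ℚ) ≠ 0 := Nat.cast_ne_zero.mpr hx.ne'
    have hy' : (y : ℚ) ≠ 0 := Nat.cast_ne_zero.mpr hy.ne'
    have hn' : (n : ℚ) ≠ 0 := Nat.cast_ne_zero.mpr hn.ne'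
    have h' : (a : ℚ) * x * y = n * (x + y) := by exact_mod_cast h
    field_simp
    linarith [h']

/-- Counting lemma: number of solutions equals number of divisors of `n^2`
congruent to `-n` mod `a`. -/
lemma card_sol (a n : ℕ) [NeZero a] (hn : 0 < n) (hcop : Nat.Coprime n a) :
    Nat.card {p : ℕ × ℕ | 0 < p.1 ∧ 0 < p.2 ∧ (a : ℚ) / n = 1 / p.1 + 1 / p.2} =
      ((n ^ 2).divisors.filter (fun u : ℕ => -(n : ZMod a) = (u : ZMod a))).card := by
  have ha : 0 < a := NeZero.pos a
  rw [sol_set_eq a n ha hn]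
  have hunit : IsUnit (-(n : ZMod a)) := ((ZMod.isUnit_iff_coprime n a).mpr hcop).neg
  -- the key facts for the forward direction
  have key : ∀ x y : ℕ, 0 < x → 0 < y → a * x * y = n * (x + y) →
      n < a * x ∧ n < a * y ∧ (a * x - n) * (a * y - n) = n ^ 2 := by
    intro x y hx hy h
    have hltx : n < a * x := by nlinarith
    have hlty : n < a * y := by nlinarith
    refine ⟨hltx, hlty, ?_⟩
    have hz : ((a * x - n : ℕ) : ℤ) * ((a * y - n : ℕ) : ℤ) = (n : ℤ) ^ 2 := by
      rw [Nat.cast_sub hltx.le, Nat.cast_sub hlty.le]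
      push_cast
      have h' : (a : ℤ) * x * y = n * (x + y) := by exact_mod_cast h
      linear_combination (a : ℤ) * h'
    exact_mod_cast hz
  refine Nat.card_eq_finsetCard _ ▸ Nat.card_congr ?_
  refine
    { toFun := fun p => ⟨a * p.1.1 - n, ?_⟩
      invFun := fun u => ⟨(((u : ℕ) + n) / a, ((n ^ 2 / (u : ℕ)) + n) / a), ?_⟩
      left_inv := ?_
      right_inv := ?_ }
  · obtain ⟨⟨x, y⟩, hx, hy, h⟩ := p
    obtain ⟨hltx, hlty, hmul⟩ := key x y hx hy h
    simp only [mem_filter, Nat.mem_divisors]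
    refine ⟨⟨⟨a * y - n, hmul.symm⟩, pow_ne_zero _ hn.ne'⟩, ?_⟩
    rw [Nat.cast_sub hltx.le]
    push_cast
    simp [ZMod.natCast_self]
  · obtain ⟨u, hu⟩ := u
    simp only [mem_filter, Nat.mem_divisors] at hu
    obtain ⟨⟨hdvd, _⟩, hmod⟩ := hu
    have hu0 : 0 < u := Nat.pos_of_dvd_of_pos hdvd (by positivity)
    have he : u * (n ^ 2 / u) = n ^ 2 := Nat.mul_div_cancel' hdvd
    set e := n ^ 2 / u with hedef
    have hemod : -(n : ZMod a) = (e : ZMod a) := by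
      have h1 : ((u : ZMod a)) * e = ((n : ZMod a)) ^ 2 := by exact_mod_cast congrArg (Nat.cast : ℕ → ZMod a) he
      have h2 : (-(n : ZMod a)) * e = (-(n : ZMod a)) * (-(n : ZMod a)) := by
        rw [hmod, h1, ← hmod]; ring
      exact (hunit.mul_left_cancel h2).symm
    have hau : a ∣ u + n := by
      have : ((u + n : ℕ) : ZMod a) = 0 := by push_cast; rw [← hmod]; ring
      exact (ZMod.natCast_eq_zero_iff _ _).mp this
    have hae : a ∣ e + n := by
      have : ((e + n : ℕ) : ZMod a) = 0 := by push_cast; rw [← hemod]; ring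
      exact (ZMod.natCast_eq_zero_iff _ _).mp this
    have hax : a * ((u + n) / a) = u + n := Nat.mul_div_cancel' hau
    have hay : a * ((e + n) / a) = e + n := Nat.mul_div_cancel' hae
    simp only [Set.mem_setOf_eq]
    refine ⟨?_, ?_, ?_⟩
    · exact Nat.div_pos (Nat.le_of_dvd (Nat.add_pos_right u hn) hau) ha
    · exact Nat.div_pos (Nat.le_of_dvd (Nat.add_pos_right e hn) hae) ha
    · set x := (u + n) / a
      set y := (e + n) / a
      have hZ : (a : ℤ) * (a * x * y) = a * (n * (x + y)) := by
        have hax' : (a : ℤ) * x = u + n := by exact_mod_cast hax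
        have hay' : (a : ℤ) * y = e + n := by exact_mod_cast hay
        have he' : (u : ℤ) * e = (n : ℤ) ^ 2 := by exact_mod_cast he
        linear_combination ((a:ℤ) * x) * hay' + ((e:ℤ) + n) * hax' - (n:ℤ) * hax' - (n:ℤ) * hay' + he'
      have : a * x * y = n * (x + y) := by
        have := mul_left_cancel₀ (by exact_mod_cast ha.ne' : (a:ℤ) ≠ 0) hZ
        exact_mod_cast this
      exact this
  · rintro ⟨⟨x, y⟩, hx, hy, h⟩
    obtain ⟨hltx, hlty, hmul⟩ := key x y hx hy h
    have hd0 : 0 < a * x - n := by omega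
    have hdiv : n ^ 2 / (a * x - n) = a * y - n := by
      rw [← hmul, Nat.mul_div_cancel_left _ hd0]
    ext : 2 <;> simp only [hdiv]
    · show (a * x - n + n) / a = x
      rw [Nat.sub_add_cancel hltx.le, Nat.mul_div_cancel_left _ ha]
    · show (a * y - n + n) / a = y
      rw [Nat.sub_add_cancel hlty.le, Nat.mul_div_cancel_left _ ha]
  · rintro ⟨u, hu⟩
    simp only [mem_filter, Nat.mem_divisors] at hu
    obtain ⟨⟨hdvd, _⟩, hmod⟩ := hu
    have hau : a ∣ u + n := by
      have : ((u + n : ℕ) : ZMod a) = 0 := by push_cast; rw [← hmod]; ring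
      exact (ZMod.natCast_eq_zero_iff _ _).mp this
    have hax : a * ((u + n) / a) = u + n := Nat.mul_div_cancel' hau
    simp only [Subtype.mk_eq_mk]
    omega

/-- For `gcd(n, a) = 1`,
`R(n; a) = (1/φ(a)) Σ_{χ mod a} conj(χ)(-n) Σ_{u ∣ n²} χ(u)`. -/
theorem R_eq_character_sum (a n : ℕ) [NeZero a] (hn : 0 < n) (hcop : Nat.Coprime n a) :
    (Nat.card {p : ℕ × ℕ | 0 < p.1 ∧ 0 < p.2 ∧ (a : ℚ) / n = 1 / p.1 + 1 / p.2} : ℂ) =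
      (Nat.totient a : ℂ)⁻¹ *
        ∑ χ : DirichletCharacter ℂ a,
          (starRingEnd ℂ) (χ (-(n : ZMod a))) * ∑ u ∈ (n ^ 2).divisors, χ u := by
  classical
  have hunit : IsUnit (-(n : ZMod a)) := ((ZMod.isUnit_iff_coprime n a).mpr hcop).neg
  have hφ : (Nat.totient a : ℂ) ≠ 0 :=
    Nat.cast_ne_zero.mpr (Nat.totient_pos.mpr (NeZero.pos a)).ne'
  have hstar : ∀ χ : DirichletCharacter ℂ a,
      (starRingEnd ℂ) (χ (-(n : ZMod a))) = χ ((-(n : ZMod a))⁻¹) := by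
    intro χ
    rw [starRingEnd_apply, MulChar.star_apply', MulChar.inv_apply]
    congr 1
    obtain ⟨v, hv⟩ := hunit
    rw [← hv, Ring.inverse_unit, ZMod.inv_coe_unit]
  calc (Nat.card {p : ℕ × ℕ | 0 < p.1 ∧ 0 < p.2 ∧ (a : ℚ) / n = 1 / p.1 + 1 / p.2} : ℂ)
      = (((n ^ 2).divisors.filter (fun u : ℕ => -(n : ZMod a) = (u : ZMod a))).card : ℂ) := by
        rw [card_sol a n hn hcop]
    _ = (Nat.totient a : ℂ)⁻¹ *
        ∑ u ∈ (n ^ 2).divisors,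
          (if -(n : ZMod a) = (u : ZMod a) then (Nat.totient a : ℂ) else 0) := by
        rw [← Finset.sum_filter, Finset.sum_const, nsmul_eq_mul]
        field_simp
    _ = (Nat.totient a : ℂ)⁻¹ *
        ∑ u ∈ (n ^ 2).divisors,
          ∑ χ : DirichletCharacter ℂ a, χ ((-(n : ZMod a))⁻¹) * χ (u : ZMod a) := by
        congr 1
        refine Finset.sum_congr rfl fun u _ => ?_
        rw [DirichletCharacter.sum_char_inv_mul_char_eq ℂ hunit]
    _ = (Nat.totient a : ℂ)⁻¹ *
        ∑ χ : DirichletCharacter ℂ a,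
          (starRingEnd ℂ) (χ (-(n : ZMod a))) * ∑ u ∈ (n ^ 2).divisors, χ u := by
        congr 1
        rw [Finset.sum_comm]
        refine Finset.sum_congr rfl fun χ _ => ?_
        rw [hstar χ, Finset.mul_sum]
end

section
/- U(N) = Σ_{n₁ ≤ N} μ(n₁)² · Σ_{n₂n₃ ≤ N/n₁} #{a ≥ 1 : a | n₂ + n₃ and gcd(a, n₁n₂n₃) = 1}, where U(N) = Σ_a Σ_{n ≤ N, gcd(n,a)=1} R(n;a). -/
/-- `R(n; a)`: the number of ordered pairs `(x, y)` of positive integers with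
`a/n = 1/x + 1/y`. -/
noncomputable def Rcount (n a : ℕ) : ℕ :=
  Nat.card {p : ℕ × ℕ | 0 < p.1 ∧ 0 < p.2 ∧ (a : ℚ) / n = 1 / p.1 + 1 / p.2}

section Aux

lemma sqfree_unique {s t u v : ℕ} (hs : Squarefree s) (hu : Squarefree u)
    (ht : t ≠ 0) (hv : v ≠ 0) (h : s * t ^ 2 = u * v ^ 2) : s = u ∧ t = v := by
  have hs0 := hs.ne_zero
  have hu0 := hu.ne_zero
  have hsu : s = u := by
    refine Nat.eq_of_factorization_eq hs0 hu0 fun p => ?_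
    have h1 := congrArg (fun m => m.factorization p) h
    simp only [Nat.factorization_mul hs0 (pow_ne_zero 2 ht),
      Nat.factorization_mul hu0 (pow_ne_zero 2 hv), Nat.factorization_pow,
      Finsupp.add_apply, Finsupp.smul_apply, smul_eq_mul] at h1
    have h2 := hs.natFactorization_le_one p
    have h3 := hu.natFactorization_le_one p
    omega
  subst hsu
  have h4 : t ^ 2 = v ^ 2 := Nat.eq_of_mul_eq_mul_left (Nat.pos_of_ne_zero hs0) h
  exact ⟨rfl, Nat.pow_left_injective (by norm_num) h4⟩

lemma rat_eq_iff {n a x y : ℕ} (hn : 0 < n) (hx : 0 < x) (hy : 0 < y) :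
    (a : ℚ) / n = 1 / x + 1 / y ↔ a * x * y = n * (x + y) := by
  have hn' : (n : ℚ) ≠ 0 := by positivity
  have hx' : (x : ℚ) ≠ 0 := by positivity
  have hy' : (y : ℚ) ≠ 0 := by positivity
  rw [div_add_div _ _ hx' hy', div_eq_div_iff hn' (by positivity)]
  constructor
  · intro h
    have : ((a * x * y : ℕ) : ℚ) = ((n * (x + y) : ℕ) : ℚ) := by push_cast; linarith [h]
    exact_mod_cast this
  · intro h
    have : ((a * x * y : ℕ) : ℚ) = ((n * (x + y) : ℕ) : ℚ) := by exact_mod_cast h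
    push_cast at this; linarith

/-- The finset of solutions `(x, y)`. -/
def solF (n a : ℕ) : Finset (ℕ × ℕ) :=
  (Finset.Icc 1 (n ^ 2 + n) ×ˢ Finset.Icc 1 (n ^ 2 + n)).filter
    (fun p => a * p.1 * p.2 = n * (p.1 + p.2))

/-- The finset of triples `(n₁, q₁, q₂)`. -/
def tripF (M n a : ℕ) : Finset (ℕ × ℕ × ℕ) :=
  (Finset.Icc 1 M ×ˢ Finset.Icc 1 M ×ˢ Finset.Icc 1 M).filter
    (fun t => Squarefree t.1 ∧ t.1 * t.2.1 * t.2.2 = n ∧ a ∣ t.2.1 + t.2.2)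

lemma Rcount_eq_solF (n a : ℕ) (hn : 0 < n) (ha : 0 < a) :
    Rcount n a = (solF n a).card := by
  rw [Rcount]
  have hset : {p : ℕ × ℕ | 0 < p.1 ∧ 0 < p.2 ∧ (a : ℚ) / n = 1 / p.1 + 1 / p.2}
      = ↑(solF n a) := by
    ext ⟨x, y⟩
    simp only [Set.mem_setOf_eq, solF, Finset.coe_filter, Finset.mem_product,
      Finset.mem_Icc, Set.mem_setOf_eq, Finset.mem_coe]
    constructor
    · rintro ⟨hx, hy, heq⟩
      have he : a * x * y = n * (x + y) := (rat_eq_iff hn hx hy).1 heq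
      have hax : n < a * x := by nlinarith
      have hay : n < a * y := by nlinarith
      have key : (a * x - n : ℤ) * (a * y - n) = (n : ℤ) ^ 2 := by
        have he' : (a : ℤ) * x * y = n * (x + y) := by exact_mod_cast he
        ring_nf
        nlinarith [he']
      have hxb : x ≤ n ^ 2 + n := by
        have h1 : (a * x - n : ℤ) ≤ (n : ℤ) ^ 2 := by nlinarith [key, hay, hax]
        have h2 : (a : ℤ) * x ≤ n ^ 2 + n := by linarith
        have h3 : (x : ℤ) ≤ n ^ 2 + n := by nlinarith [h2, hax]
        exact_mod_cast h3
      have hyb : y ≤ n ^ 2 + n := by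
        have h1 : (a * y - n : ℤ) ≤ (n : ℤ) ^ 2 := by nlinarith [key, hay, hax]
        have h2 : (a : ℤ) * y ≤ n ^ 2 + n := by linarith
        have h3 : (y : ℤ) ≤ n ^ 2 + n := by nlinarith [h2, hay]
        exact_mod_cast h3
      exact ⟨⟨⟨hx, hxb⟩, ⟨hy, hyb⟩⟩, he⟩
    · rintro ⟨⟨⟨hx1, hxb⟩, ⟨hy1, hyb⟩⟩, he⟩
      exact ⟨hx1, hy1, (rat_eq_iff hn hx1 hy1).2 he⟩
  rw [hset, Nat.card_coe_set_eq, Set.ncard_coe_finset]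

lemma Rcount_eq_zero {n a : ℕ} (hn : 0 < n) (h : 2 * n < a) : Rcount n a = 0 := by
  rw [Rcount_eq_solF n a hn (by omega), Finset.card_eq_zero]
  rw [Finset.eq_empty_iff_forall_notMem]
  rintro ⟨x, y⟩ hm
  simp only [solF, Finset.mem_filter, Finset.mem_product, Finset.mem_Icc] at hm
  obtain ⟨⟨⟨hx1, _⟩, ⟨hy1, _⟩⟩, he⟩ := hm
  have h1 : x + y ≤ 2 * (x * y) := by nlinarith
  have h2 : n * (x + y) ≤ 2 * n * (x * y) := by nlinarith
  have h3 : (2 * n + 1) * (x * y) ≤ a * x * y := by nlinarith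
  nlinarith

lemma trip_card {M n a : ℕ} (hn : 0 < n) (ha : 0 < a) (hM : n ≤ M)
    (hcop : Nat.Coprime n a) : (tripF M n a).card = (solF n a).card := by
  refine Finset.card_bij
    (fun t _ => (t.1 * t.2.1 * ((t.2.1 + t.2.2) / a), t.1 * t.2.2 * ((t.2.1 + t.2.2) / a)))
    ?_ ?_ ?_
  · -- maps into solF
    rintro ⟨n₁, q₁, q₂⟩ ht
    simp only [tripF, Finset.mem_filter, Finset.mem_product, Finset.mem_Icc] at ht
    obtain ⟨⟨⟨h1, h1M⟩, ⟨h2, h2M⟩, ⟨h3, h3M⟩⟩, hsq, hprod, hdvd⟩ := ht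
    obtain ⟨c, hc⟩ := hdvd
    have hceq : (q₁ + q₂) / a = c := by rw [hc]; exact Nat.mul_div_cancel_left c ha
    have hcpos : 0 < c := by
      rcases Nat.eq_zero_or_pos c with rfl | h
      · rw [Nat.mul_zero] at hc; omega
      · exact h
    simp only [solF, Finset.mem_filter, Finset.mem_product, Finset.mem_Icc, hceq]
    have hq1n : q₁ ≤ n := Nat.le_of_dvd hn ⟨n₁ * q₂, by rw [← hprod]; ring⟩
    have hq2n : q₂ ≤ n := Nat.le_of_dvd hn ⟨n₁ * q₁, by rw [← hprod]; ring⟩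
    have h4 : n₁ * q₁ ≤ n := Nat.le_of_dvd hn ⟨q₂, hprod.symm⟩
    have h4' : n₁ * q₂ ≤ n := Nat.le_of_dvd hn ⟨q₁, by rw [← hprod]; ring⟩
    have hx : a * (n₁ * q₁ * c) = n₁ * q₁ ^ 2 + n := by
      have e : a * (n₁ * q₁ * c) = n₁ * q₁ * (a * c) := by ring
      rw [e, ← hc, ← hprod]; ring
    have hy : a * (n₁ * q₂ * c) = n₁ * q₂ ^ 2 + n := by
      have e : a * (n₁ * q₂ * c) = n₁ * q₂ * (a * c) := by ring
      rw [e, ← hc, ← hprod]; ring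
    have hxb : n₁ * q₁ * c ≤ n ^ 2 + n := by
      have h6 : n₁ * q₁ * c ≤ a * (n₁ * q₁ * c) := Nat.le_mul_of_pos_left _ ha
      have h7 : n₁ * q₁ * q₁ ≤ n * n := Nat.mul_le_mul h4 hq1n
      nlinarith [hx]
    have hyb : n₁ * q₂ * c ≤ n ^ 2 + n := by
      have h6 : n₁ * q₂ * c ≤ a * (n₁ * q₂ * c) := Nat.le_mul_of_pos_left _ ha
      have h7 : n₁ * q₂ * q₂ ≤ n * n := Nat.mul_le_mul h4' hq2n
      nlinarith [hy]
    refine ⟨⟨⟨Nat.one_le_iff_ne_zero.mpr (by positivity), hxb⟩,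
      ⟨Nat.one_le_iff_ne_zero.mpr (by positivity), hyb⟩⟩, ?_⟩
    subst hprod
    have hsum : n₁ * q₁ * c + n₁ * q₂ * c = n₁ * c * (a * c) := by rw [← hc]; ring
    rw [hsum]; ring
  · -- injective
    rintro ⟨n₁, q₁, q₂⟩ ht ⟨m₁, p₁, p₂⟩ ht' h
    simp only [tripF, Finset.mem_filter, Finset.mem_product, Finset.mem_Icc] at ht ht'
    obtain ⟨⟨⟨h1, _⟩, ⟨h2, _⟩, ⟨h3, _⟩⟩, hsq, hprod, hdvd⟩ := ht
    obtain ⟨⟨⟨g1, _⟩, ⟨g2, _⟩, ⟨g3, _⟩⟩, gsq, gprod, gdvd⟩ := ht'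
    obtain ⟨c, hc⟩ := hdvd
    obtain ⟨c', hc'⟩ := gdvd
    have hceq : (q₁ + q₂) / a = c := by rw [hc]; exact Nat.mul_div_cancel_left c ha
    have hceq' : (p₁ + p₂) / a = c' := by rw [hc']; exact Nat.mul_div_cancel_left c' ha
    rw [Prod.ext_iff] at h
    simp only [hceq, hceq'] at h
    obtain ⟨hX, hY⟩ := h
    have hcpos : 0 < c := by
      rcases Nat.eq_zero_or_pos c with rfl | h
      · rw [Nat.mul_zero] at hc; omega
      · exact h
    have hcpos' : 0 < c' := by
      rcases Nat.eq_zero_or_pos c' with rfl | h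
      · rw [Nat.mul_zero] at hc'; omega
      · exact h
    have key : a * (n₁ * c ^ 2) = a * (m₁ * c' ^ 2) := by
      have e1 : a * (n₁ * c ^ 2) = n₁ * c * (a * c) := by ring
      have e2 : a * (m₁ * c' ^ 2) = m₁ * c' * (a * c') := by ring
      rw [e1, e2, ← hc, ← hc']
      have e3 : n₁ * c * (q₁ + q₂) = n₁ * q₁ * c + n₁ * q₂ * c := by ring
      have e4 : m₁ * c' * (p₁ + p₂) = m₁ * p₁ * c' + m₁ * p₂ * c' := by ring
      rw [e3, e4, hX, hY]
    have key2 : n₁ * c ^ 2 = m₁ * c' ^ 2 := Nat.eq_of_mul_eq_mul_left ha key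
    obtain ⟨hnm, hcc⟩ := sqfree_unique hsq gsq (by omega) (by omega) key2
    subst hnm; subst hcc
    have hpos : 0 < n₁ * c := by positivity
    have hq1 : q₁ = p₁ := by
      have e : q₁ * (n₁ * c) = p₁ * (n₁ * c) := by linarith [hX]
      exact Nat.eq_of_mul_eq_mul_right hpos e
    have hq2 : q₂ = p₂ := by
      have e : q₂ * (n₁ * c) = p₂ * (n₁ * c) := by linarith [hY]
      exact Nat.eq_of_mul_eq_mul_right hpos e
    simp [hq1, hq2]
  · -- surjective
    rintro ⟨x, y⟩ hp
    simp only [solF, Finset.mem_filter, Finset.mem_product, Finset.mem_Icc] at hp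
    obtain ⟨⟨⟨hx1, _⟩, ⟨hy1, _⟩⟩, heq⟩ := hp
    set g := Nat.gcd x y with hgdef
    have hgpos : 0 < g := Nat.gcd_pos_of_pos_left y hx1
    obtain ⟨x', hx'⟩ : g ∣ x := Nat.gcd_dvd_left x y
    obtain ⟨y', hy'⟩ : g ∣ y := Nat.gcd_dvd_right x y
    have hx'pos : 0 < x' := by
      rcases Nat.eq_zero_or_pos x' with rfl | h
      · rw [Nat.mul_zero] at hx'; omega
      · exact h
    have hy'pos : 0 < y' := by
      rcases Nat.eq_zero_or_pos y' with rfl | h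
      · rw [Nat.mul_zero] at hy'; omega
      · exact h
    have hcop' : Nat.Coprime x' y' := by
      have h0 := Nat.coprime_div_gcd_div_gcd (m := x) (n := y) (by rw [← hgdef]; exact hgpos)
      rw [← hgdef, hx', hy', Nat.mul_div_cancel_left _ hgpos,
        Nat.mul_div_cancel_left _ hgpos] at h0
      exact h0
    have step1 : a * g * (x' * y') = n * (x' + y') := by
      have e : g * (a * g * (x' * y')) = g * (n * (x' + y')) := by
        calc g * (a * g * (x' * y')) = a * (g * x') * (g * y') := by ring
          _ = n * (g * x' + g * y') := by rw [← hx', ← hy', heq]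
          _ = g * (n * (x' + y')) := by ring
      exact Nat.eq_of_mul_eq_mul_left hgpos e
    have hsumcop : Nat.Coprime x' (x' + y') := by
      simpa using (Nat.coprime_add_self_left (m := x') (n := y')).2 hcop'
    have hsumcop2 : Nat.Coprime y' (x' + y') := by
      simpa using (Nat.coprime_add_self_right (m := y') (n := x')).2 hcop'.symm
    have hx'n : x' ∣ n := by
      have h1 : x' ∣ n * (x' + y') := ⟨a * g * y', by rw [← step1]; ring⟩
      exact Nat.Coprime.dvd_of_dvd_mul_right hsumcop h1
    have hy'n : y' ∣ n := by
      have h1 : y' ∣ n * (x' + y') := ⟨a * g * x', by rw [← step1]; ring⟩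
      exact Nat.Coprime.dvd_of_dvd_mul_right hsumcop2 h1
    have hxyn : x' * y' ∣ n := Nat.Coprime.mul_dvd_of_dvd_of_dvd hcop' hx'n hy'n
    obtain ⟨m, hm⟩ := hxyn
    have hmpos : 0 < m := by
      rcases Nat.eq_zero_or_pos m with rfl | h
      · rw [Nat.mul_zero] at hm; omega
      · exact h
    have step2 : a * g = m * (x' + y') := by
      have e : (x' * y') * (a * g) = (x' * y') * (m * (x' + y')) := by
        calc (x' * y') * (a * g) = a * g * (x' * y') := by ring
          _ = n * (x' + y') := step1
          _ = (x' * y') * (m * (x' + y')) := by rw [hm]; ring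
      exact Nat.eq_of_mul_eq_mul_left (by positivity) e
    have hadvd : a ∣ x' + y' := by
      have h1 : a ∣ m * (x' + y') := ⟨g, by rw [← step2]⟩
      have hma : Nat.Coprime a m :=
        (Nat.Coprime.coprime_dvd_left ⟨x' * y', by rw [hm]; ring⟩ hcop).symm
      exact hma.dvd_of_dvd_mul_left h1
    obtain ⟨n₁, t, hts, hsq⟩ := Nat.sq_mul_squarefree m
    have htpos : 0 < t := by
      rcases Nat.eq_zero_or_pos t with rfl | h
      · simp at hts; omega
      · exact h
    have hn₁pos : 0 < n₁ := by
      rcases Nat.eq_zero_or_pos n₁ with rfl | h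
      · simp at hts; omega
      · exact h
    obtain ⟨s, hs⟩ := hadvd
    have hspos : 0 < s := by
      rcases Nat.eq_zero_or_pos s with rfl | h
      · rw [Nat.mul_zero] at hs; omega
      · exact h
    have hgms : g = m * s := by
      have e : a * g = a * (m * s) := by rw [step2, hs]; ring
      exact Nat.eq_of_mul_eq_mul_left ha e
    refine ⟨(n₁, t * x', t * y'), ?_, ?_⟩
    · simp only [tripF, Finset.mem_filter, Finset.mem_product, Finset.mem_Icc]
      have hprod : n₁ * (t * x') * (t * y') = n := by
        rw [hm, ← hts]; ring
      have hd1 : n₁ ≤ M :=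
        le_trans (Nat.le_of_dvd hn ⟨t * x' * (t * y'), by rw [← hprod]; ring⟩) hM
      have hd2 : t * x' ≤ M :=
        le_trans (Nat.le_of_dvd hn ⟨n₁ * (t * y'), by rw [← hprod]; ring⟩) hM
      have hd3 : t * y' ≤ M :=
        le_trans (Nat.le_of_dvd hn ⟨n₁ * (t * x'), by rw [← hprod]; ring⟩) hM
      refine ⟨⟨⟨hn₁pos, hd1⟩, ⟨Nat.one_le_iff_ne_zero.mpr (by positivity), hd2⟩,
        ⟨Nat.one_le_iff_ne_zero.mpr (by positivity), hd3⟩⟩, hsq, hprod, ?_⟩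
      exact ⟨t * s, by rw [← Nat.mul_add, hs]; ring⟩
    · have hdiv : (t * x' + t * y') / a = t * s := by
        have e : t * x' + t * y' = a * (t * s) := by rw [← Nat.mul_add, hs]; ring
        rw [e]; exact Nat.mul_div_cancel_left _ ha
      dsimp only
      rw [hdiv]
      have ex : n₁ * (t * x') * (t * s) = x := by
        calc n₁ * (t * x') * (t * s) = (t ^ 2 * n₁) * s * x' := by ring
          _ = m * s * x' := by rw [hts]
          _ = g * x' := by rw [hgms]
          _ = x := hx'.symm
      have ey : n₁ * (t * y') * (t * s) = y := by
        calc n₁ * (t * y') * (t * s) = (t ^ 2 * n₁) * s * y' := by ring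
          _ = m * s * y' := by rw [hts]
          _ = g * y' := by rw [hgms]
          _ = y := hy'.symm
      rw [ex, ey]

/-- The big triples finset (product bounded by `M`). -/
def bigS (M : ℕ) : Finset (ℕ × ℕ × ℕ) :=
  (Finset.Icc 1 M ×ˢ Finset.Icc 1 M ×ˢ Finset.Icc 1 M).filter
    (fun t => Squarefree t.1 ∧ t.1 * t.2.1 * t.2.2 ≤ M)

lemma f_eq (M a : ℕ) (ha : 0 < a) :
    (∑ n ∈ Finset.Icc 1 M, if Nat.Coprime n a then Rcount n a else 0)
      = ((bigS M).filter
          (fun t => a ∣ t.2.1 + t.2.2 ∧ Nat.Coprime (t.1 * t.2.1 * t.2.2) a)).card := by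
  rw [Finset.card_eq_sum_card_fiberwise
    (f := fun t => t.1 * t.2.1 * t.2.2) (t := Finset.Icc 1 M) ?_]
  · refine Finset.sum_congr rfl fun n hn => ?_
    rw [Finset.mem_Icc] at hn
    obtain ⟨hn1, hnM⟩ := hn
    by_cases hc : Nat.Coprime n a
    · rw [if_pos hc, Rcount_eq_solF n a (by omega) ha,
        ← trip_card (by omega : 0 < n) ha hnM hc]
      congr 1
      ext ⟨n₁, q₁, q₂⟩
      simp only [tripF, bigS, Finset.mem_filter, Finset.mem_product, Finset.mem_Icc]
      constructor
      · rintro ⟨hicc, hsq, hprod, hdvd⟩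
        refine ⟨⟨⟨hicc, hsq, by rw [hprod]; exact hnM⟩, hdvd, ?_⟩, hprod⟩
        rw [hprod]; exact hc
      · rintro ⟨⟨⟨hicc, hsq, _⟩, hdvd, _⟩, hprod⟩
        exact ⟨hicc, hsq, hprod, hdvd⟩
    · rw [if_neg hc]
      symm
      rw [Finset.card_eq_zero, Finset.eq_empty_iff_forall_notMem]
      rintro ⟨n₁, q₁, q₂⟩ hmem
      simp only [bigS, Finset.mem_filter, Finset.mem_product, Finset.mem_Icc] at hmem
      obtain ⟨⟨_, _, hcop'⟩, hprod⟩ := hmem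
      exact hc (hprod ▸ hcop')
  · rintro ⟨n₁, q₁, q₂⟩ hmem
    simp only [bigS, Finset.mem_coe, Finset.mem_filter, Finset.mem_product, Finset.mem_Icc] at hmem
    obtain ⟨⟨⟨⟨h1, _⟩, ⟨h2, _⟩, ⟨h3, _⟩⟩, _, hle⟩, _⟩ := hmem
    rw [Finset.mem_coe, Finset.mem_Icc]
    exact ⟨Nat.one_le_iff_ne_zero.mpr (by positivity), hle⟩

end Aux

open ArithmeticFunction ArithmeticFunction.Moebius in
/-- `U(N) = Σ_{n₁ ≤ N} μ(n₁)² Σ_{n₂n₃ ≤ N/n₁} #{a ≥ 1 : a ∣ n₂+n₃, (a, n₁n₂n₃)=1}`, where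
`U(N) = Σ_a Σ_{n ≤ N, (n,a)=1} R(n;a)`. -/
theorem U_eq_triple_sum (N : ℝ) (hN : 0 < N) :
    ∑' a : ℕ+, ((∑ n ∈ Finset.Icc 1 ⌊N⌋₊,
        if Nat.Coprime n a then Rcount n a else 0 : ℕ) : ℝ) =
      ∑ n₁ ∈ Finset.Icc 1 ⌊N⌋₊, ((μ n₁ : ℝ)) ^ 2 *
        ∑ q ∈ (Finset.Icc 1 ⌊N⌋₊ ×ˢ Finset.Icc 1 ⌊N⌋₊).filter
            (fun q => (n₁ * q.1 * q.2 : ℝ) ≤ N),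
          (((q.1 + q.2).divisors.filter
              (fun a => Nat.Coprime a (n₁ * q.1 * q.2))).card : ℝ) := by
  set M := ⌊N⌋₊ with hM
  rcases Nat.eq_zero_or_pos M with hM0 | hM0
  · rw [hM0]
    rw [show Finset.Icc 1 0 = (∅ : Finset ℕ) from rfl]
    simp
  -- the ℕ-level identity
  have key : (∑ a ∈ Finset.Icc 1 (2 * M), ∑ n ∈ Finset.Icc 1 M,
        if Nat.Coprime n a then Rcount n a else 0)
      = ∑ n₁ ∈ Finset.Icc 1 M, if Squarefree n₁ then
          (∑ q ∈ (Finset.Icc 1 M ×ˢ Finset.Icc 1 M).filter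
              (fun q => n₁ * q.1 * q.2 ≤ M),
            ((q.1 + q.2).divisors.filter
              (fun a => Nat.Coprime a (n₁ * q.1 * q.2))).card) else 0 := by
    have step1 : (∑ a ∈ Finset.Icc 1 (2 * M), ∑ n ∈ Finset.Icc 1 M,
          if Nat.Coprime n a then Rcount n a else 0)
        = ∑ a ∈ Finset.Icc 1 (2 * M), ∑ t ∈ bigS M,
            if a ∣ t.2.1 + t.2.2 ∧ Nat.Coprime (t.1 * t.2.1 * t.2.2) a then 1 else 0 := by
      refine Finset.sum_congr rfl fun a ha => ?_
      rw [Finset.mem_Icc] at ha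
      rw [f_eq M a (by omega), Finset.card_filter]
    rw [step1, Finset.sum_comm]
    have step2 : ∀ t ∈ bigS M,
        (∑ a ∈ Finset.Icc 1 (2 * M),
          if a ∣ t.2.1 + t.2.2 ∧ Nat.Coprime (t.1 * t.2.1 * t.2.2) a then 1 else 0)
        = ((t.2.1 + t.2.2).divisors.filter
            (fun a => Nat.Coprime a (t.1 * t.2.1 * t.2.2))).card := by
      rintro ⟨n₁, q₁, q₂⟩ hmem
      simp only [bigS, Finset.mem_filter, Finset.mem_product, Finset.mem_Icc] at hmem
      obtain ⟨⟨⟨h1, h1M⟩, ⟨h2, h2M⟩, ⟨h3, h3M⟩⟩, hsq, hle⟩ := hmem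
      rw [← Finset.card_filter]
      congr 1
      ext a
      simp only [Finset.mem_filter, Finset.mem_Icc, Nat.mem_divisors]
      constructor
      · rintro ⟨⟨ha1, ha2⟩, hdvd, hcop⟩
        exact ⟨⟨hdvd, by omega⟩, hcop.symm⟩
      · rintro ⟨⟨hdvd, hne⟩, hcop⟩
        have hale : a ≤ q₁ + q₂ := Nat.le_of_dvd (by omega) hdvd
        have hage : 1 ≤ a := Nat.one_le_iff_ne_zero.mpr (by rintro rfl; simp at hdvd; omega)
        exact ⟨⟨hage, by omega⟩, hdvd, hcop.symm⟩
    rw [Finset.sum_congr rfl step2]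
    -- regroup the triple sum
    rw [bigS, Finset.sum_filter, Finset.sum_product]
    refine Finset.sum_congr rfl fun n₁ hn₁ => ?_
    by_cases hsq : Squarefree n₁
    · rw [if_pos hsq, Finset.sum_filter]
      refine Finset.sum_congr rfl fun q hq => ?_
      simp [hsq]
    · rw [if_neg hsq]
      refine Finset.sum_eq_zero fun q hq => ?_
      simp [hsq]
  -- convert the tsum
  have hzero : ∀ b : ℕ+, b ∉ Finset.Icc (1 : ℕ+) ((2 * M).toPNat (by omega)) →
      ((∑ n ∈ Finset.Icc 1 M,
        if Nat.Coprime n b then Rcount n b else 0 : ℕ) : ℝ) = 0 := by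
    intro b hb
    have hbM : 2 * M < (b : ℕ) := by
      simp only [Finset.mem_Icc, not_and] at hb
      have h2 := hb b.one_le
      rw [not_le] at h2
      exact_mod_cast h2
    have : (∑ n ∈ Finset.Icc 1 M, if Nat.Coprime n b then Rcount n b else 0) = 0 := by
      refine Finset.sum_eq_zero fun n hn => ?_
      rw [Finset.mem_Icc] at hn
      have : Rcount n b = 0 := Rcount_eq_zero (by omega) (by omega)
      simp [this]
    rw [this]; simp
  rw [tsum_eq_sum hzero]
  have hconv : (∑ a ∈ Finset.Icc (1 : ℕ+) ((2 * M).toPNat (by omega)),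
        ((∑ n ∈ Finset.Icc 1 M,
          if Nat.Coprime n a then Rcount n a else 0 : ℕ) : ℝ))
      = ((∑ a ∈ Finset.Icc 1 (2 * M), ∑ n ∈ Finset.Icc 1 M,
          if Nat.Coprime n a then Rcount n a else 0 : ℕ) : ℝ) := by
    have hNat : (∑ a ∈ Finset.Icc (1 : ℕ+) ((2 * M).toPNat (by omega)),
          ∑ n ∈ Finset.Icc 1 M, if Nat.Coprime n a then Rcount n a else 0)
        = ∑ a ∈ Finset.Icc 1 (2 * M), ∑ n ∈ Finset.Icc 1 M,
            if Nat.Coprime n a then Rcount n a else 0 := by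
      rw [show (Finset.Icc 1 (2 * M) : Finset ℕ)
          = (Finset.Icc (1 : ℕ+) ((2 * M).toPNat (by omega))).map (Function.Embedding.subtype _) from
        (PNat.map_subtype_embedding_Icc 1 ((2 * M).toPNat (by omega))).symm]
      exact (Finset.sum_map (Finset.Icc (1 : ℕ+) ((2 * M).toPNat (by omega)))
        (Function.Embedding.subtype _) (fun a : ℕ => ∑ n ∈ Finset.Icc 1 M,
        if Nat.Coprime n a then Rcount n a else 0)).symm
    rw [← hNat]
    push_cast
    rfl
  rw [hconv, key]
  -- now handle the RHS
  push_cast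
  refine Finset.sum_congr rfl fun n₁ hn₁ => ?_
  rw [Finset.mem_Icc] at hn₁
  have hfilter : (Finset.Icc 1 M ×ˢ Finset.Icc 1 M).filter
        (fun q => ((n₁ : ℝ) * q.1 * q.2 : ℝ) ≤ N)
      = (Finset.Icc 1 M ×ˢ Finset.Icc 1 M).filter
        (fun q => n₁ * q.1 * q.2 ≤ M) := by
    refine Finset.filter_congr fun q hq => ?_
    rw [hM]
    rw [show ((n₁ : ℝ) * q.1 * q.2) = ((n₁ * q.1 * q.2 : ℕ) : ℝ) by push_cast; ring]
    exact (Nat.le_floor_iff hN.le).symm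
  rw [hfilter]
  by_cases hsq : Squarefree n₁
  · rw [if_pos hsq, ArithmeticFunction.moebius_apply_of_squarefree hsq]
    push_cast
    have hpow : ((-1 : ℝ) ^ ArithmeticFunction.cardFactors n₁) ^ 2 = 1 := by
      rw [← pow_mul, mul_comm, pow_mul]; norm_num
    rw [hpow, one_mul]
  · rw [if_neg hsq, ArithmeticFunction.moebius_eq_zero_of_not_squarefree hsq]
    norm_num
end
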